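/- arXiv:2405.13755 — 4 statements merged into one kernel-verified Lean document; each statement's English description precedes it below -/
import Mathlib

section
/- In a linear MDP, the set M = {μ : (λ,μ) ∈ M^P_Φ} of μ-components of feasible points of the relaxed primal LP coincides with the feasible set of the original primal LP, i.e. with the set of valid discounted state-action occupancy measures {μ ⪰ 0 : Eᵀμ = (1−γ)ν₀ + γPᵀμ}. Furthermore, for every maximizer (λ*, μ*) of ⟨λ, ω⟩ over M^P_Φ, μ* is the occupancy measure of an optimal policy. -/
noncomputable section
open MeasureTheory Finset Matrix
open scoped BigOperators ENNReal

namespace Paper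

variable {X A : Type*}

/-- Euclidean dot product on `Fin d → ℝ`. -/
def dotp {d : ℕ} (u v : Fin d → ℝ) : ℝ := ∑ i, u i * v i

/-- Euclidean norm on `Fin d → ℝ`. -/
def nrm2 {d : ℕ} (u : Fin d → ℝ) : ℝ := Real.sqrt (∑ i, (u i) ^ 2)

/-- Squared weighted norm `uᵀ M u`. -/
def wnormSq {d : ℕ} (M : Matrix (Fin d) (Fin d) ℝ) (u : Fin d → ℝ) : ℝ := dotp u (M.mulVec u)

/-- Kullback–Leibler divergence between finitely supported distributions. -/
def KLdiv [Fintype A] (p q : A → ℝ) : ℝ := ∑ a, p a * Real.log (p a / q a)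

/-- A stochastic policy. -/
def IsPolicy [Fintype A] (π : X → A → ℝ) : Prop :=
  (∀ x a, 0 ≤ π x a) ∧ (∀ x, ∑ a, π x a = 1)

/-- A probability distribution over a finite set. -/
def IsDist [Fintype X] (ν : X → ℝ) : Prop := (∀ x, 0 ≤ ν x) ∧ ∑ x, ν x = 1

/-- A transition kernel. -/
def IsKernel [Fintype X] (p : X → A → X → ℝ) : Prop :=
  (∀ x a x', 0 ≤ p x a x') ∧ (∀ x a, ∑ x', p x a x' = 1)

/-- The softmax policy associated with parameter vector `θ`. -/
def softmax [Fintype A] {d : ℕ} (φ : X → A → Fin d → ℝ) (θ : Fin d → ℝ) (x : X) (a : A) : ℝ :=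
  Real.exp (dotp (φ x a) θ) / ∑ a', Real.exp (dotp (φ x a') θ)

/-- State-action distribution at step `k` of the process started from `ν₀` and following `π`. -/
def trajDist [Fintype X] [Fintype A] (p : X → A → X → ℝ) (ν₀ : X → ℝ) (π : X → A → ℝ) :
    ℕ → X → A → ℝ
  | 0 => fun x a => ν₀ x * π x a
  | k + 1 => fun x a => (∑ x', ∑ a', trajDist p ν₀ π k x' a' * p x' a' x) * π x a

/-- Normalized discounted state-action occupancy measure of policy `π`. -/
def occupancy [Fintype X] [Fintype A] (γ : ℝ) (p : X → A → X → ℝ) (ν₀ : X → ℝ)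
    (π : X → A → ℝ) (x : X) (a : A) : ℝ :=
  (1 - γ) * ∑' k : ℕ, γ ^ k * trajDist p ν₀ π k x a

/-- `k`-step state transition kernel of the Markov chain induced by policy `π`. -/
def kernelPow [Fintype X] [Fintype A] [DecidableEq X] (p : X → A → X → ℝ) (π : X → A → ℝ) :
    ℕ → X → X → ℝ
  | 0 => fun x y => if x = y then 1 else 0
  | k + 1 => fun x y => ∑ z, kernelPow p π k x z * ∑ a, π z a * p z a y

/-- The value function of policy `π`. -/
def vval [Fintype X] [Fintype A] [DecidableEq X] (γ : ℝ) (r : X → A → ℝ) (p : X → A → X → ℝ)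
    (π : X → A → ℝ) (x : X) : ℝ :=
  ∑' k : ℕ, γ ^ k * ∑ y, kernelPow p π k x y * ∑ a, π y a * r y a

/-- The action-value function of policy `π`. -/
def qval [Fintype X] [Fintype A] [DecidableEq X] (γ : ℝ) (r : X → A → ℝ) (p : X → A → X → ℝ)
    (π : X → A → ℝ) (x : X) (a : A) : ℝ :=
  r x a + γ * ∑ x', p x a x' * vval γ r p π x'

/-- The normalized discounted return of policy `π`. -/
def ret [Fintype X] [Fintype A] (γ : ℝ) (p : X → A → X → ℝ) (ν₀ : X → ℝ) (r : X → A → ℝ)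
    (π : X → A → ℝ) : ℝ := ∑ x, ∑ a, occupancy γ p ν₀ π x a * r x a

/-- The parametrized value-function candidate `v_{θ,π}`. -/
def vparam [Fintype A] {d : ℕ} (φ : X → A → Fin d → ℝ) (θ : Fin d → ℝ) (π : X → A → ℝ)
    (x : X) : ℝ := ∑ a, π x a * dotp θ (φ x a)

/-- `Ψ v`, where `Ψ` is the matrix with columns `ψ x`. -/
def psiApply [Fintype X] {d : ℕ} (ψ : X → Fin d → ℝ) (v : X → ℝ) : Fin d → ℝ :=
  ∑ x, v x • ψ x

/-- `Φᵀ μ`, the feature occupancy of a state-action measure `μ`. -/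
def featOcc [Fintype X] [Fintype A] {d : ℕ} (φ : X → A → Fin d → ℝ) (μ : X → A → ℝ) :
    Fin d → ℝ := ∑ x, ∑ a, μ x a • φ x a

/-- The parametrized occupancy candidate `μ_{λ,π}` built from columns `ψh`. -/
def muOf [Fintype X] {d : ℕ} (γ : ℝ) (ν₀ : X → ℝ) (ψh : X → Fin d → ℝ) (lam : Fin d → ℝ)
    (π : X → A → ℝ) (x : X) (a : A) : ℝ :=
  π x a * ((1 - γ) * ν₀ x + γ * dotp (ψh x) lam)

/-- The reduced Lagrangian `f(λ, π; θ)`. -/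
def lag [Fintype X] [Fintype A] {d : ℕ} (γ : ℝ) (ν₀ : X → ℝ) (omg : Fin d → ℝ)
    (ψ : X → Fin d → ℝ) (φ : X → A → Fin d → ℝ) (lam θv : Fin d → ℝ) (π : X → A → ℝ) : ℝ :=
  (1 - γ) * ∑ x, ν₀ x * vparam φ θv π x
    + dotp lam (omg + γ • psiApply ψ (vparam φ θv π) - θv)

/-- The regularized empirical covariance matrix `Λ̂`. -/
def covMat {d n : ℕ} (β : ℝ) (φi : Fin n → Fin d → ℝ) : Matrix (Fin d) (Fin d) ℝ :=
  β • (1 : Matrix (Fin d) (Fin d) ℝ) + (n : ℝ)⁻¹ • ∑ i, vecMulVec (φi i) (φi i)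

/-- `Ψ̂ v`, where `Ψ̂` is the least-squares estimator of `Ψ`. -/
def psiHatApply {X : Type*} {d n : ℕ} (β : ℝ) (φi : Fin n → Fin d → ℝ)
    (xs : Fin n → X) (v : X → ℝ) : Fin d → ℝ :=
  (covMat β φi)⁻¹.mulVec ((n : ℝ)⁻¹ • ∑ i, v (xs i) • φi i)

/-- `ψ̂ x`, the column of the least-squares estimator `Ψ̂` at state `x`. -/
def psiHatCol {X : Type*} [DecidableEq X] {d n : ℕ} (β : ℝ) (φi : Fin n → Fin d → ℝ)
    (xs : Fin n → X) (x : X) : Fin d → ℝ :=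
  (covMat β φi)⁻¹.mulVec ((n : ℝ)⁻¹ • ∑ i, (if xs i = x then (1 : ℝ) else 0) • φi i)


/-- The feasible set of the relaxed primal LP (3). -/
def MPfeas {X A : Type*} [Fintype X] [Fintype A] {d : ℕ}
    (γ : ℝ) (ν₀ : X → ℝ) (φ : X → A → Fin d → ℝ) (ψ : X → Fin d → ℝ)
    (lam : Fin d → ℝ) (μv : X → A → ℝ) : Prop :=
  (∀ x a, 0 ≤ μv x a) ∧
  (∀ x, ∑ a, μv x a = (1 - γ) * ν₀ x + γ * dotp (ψ x) lam) ∧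
  lam = featOcc φ μv


section Aux

variable [Fintype X] [Fintype A]
variable {γ : ℝ} {p : X → A → X → ℝ} {ν₀ : X → ℝ} {π : X → A → ℝ}

lemma trajDist_nonneg (hp : IsKernel p) (hν : IsDist ν₀) (hπ : ∀ x a, 0 ≤ π x a) :
    ∀ k x a, 0 ≤ trajDist p ν₀ π k x a := by
  intro k
  induction k with
  | zero => exact fun x a => mul_nonneg (hν.1 x) (hπ x a)
  | succ k ih =>
      intro x a
      exact mul_nonneg (Finset.sum_nonneg fun x' _ => Finset.sum_nonneg fun a' _ =>
        mul_nonneg (ih x' a') (hp.1 x' a' x)) (hπ x a)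

lemma trajDist_total (hp : IsKernel p) (hν : IsDist ν₀) (hπ : IsPolicy π) :
    ∀ k, ∑ x, ∑ a, trajDist p ν₀ π k x a = 1 := by
  intro k
  induction k with
  | zero =>
      simp only [trajDist, ← Finset.mul_sum]
      simp [hπ.2, hν.2]
  | succ k ih =>
      have hs : ∀ x, ∑ a, trajDist p ν₀ π (k+1) x a
          = ∑ x', ∑ a', trajDist p ν₀ π k x' a' * p x' a' x := by
        intro x
        simp only [trajDist, ← Finset.mul_sum, hπ.2 x, mul_one]
      simp only [hs]
      calc ∑ x, ∑ x', ∑ a', trajDist p ν₀ π k x' a' * p x' a' x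
          = ∑ x', ∑ x, ∑ a', trajDist p ν₀ π k x' a' * p x' a' x := Finset.sum_comm
        _ = ∑ x', ∑ a', ∑ x, trajDist p ν₀ π k x' a' * p x' a' x := by
            exact Finset.sum_congr rfl fun x' _ => Finset.sum_comm
        _ = ∑ x', ∑ a', trajDist p ν₀ π k x' a' * ∑ x, p x' a' x := by
            simp [Finset.mul_sum]
        _ = 1 := by simp only [hp.2, mul_one]; exact ih

lemma trajDist_le_one (hp : IsKernel p) (hν : IsDist ν₀) (hπ : IsPolicy π) (k : ℕ) (x : X) (a : A) :
    trajDist p ν₀ π k x a ≤ 1 := by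
  have hn := trajDist_nonneg hp hν hπ.1
  calc trajDist p ν₀ π k x a ≤ ∑ b, trajDist p ν₀ π k x b :=
        Finset.single_le_sum (fun b _ => hn k x b) (Finset.mem_univ a)
    _ ≤ ∑ y, ∑ b, trajDist p ν₀ π k y b :=
        Finset.single_le_sum (fun y _ => Finset.sum_nonneg fun b _ => hn k y b) (Finset.mem_univ x)
    _ = 1 := trajDist_total hp hν hπ k

lemma summable_traj (hγ : γ ∈ Set.Ioo (0:ℝ) 1) (hp : IsKernel p) (hν : IsDist ν₀)
    (hπ : IsPolicy π) (x : X) (a : A) :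
    Summable fun k => γ ^ k * trajDist p ν₀ π k x a :=
  Summable.of_nonneg_of_le
    (fun k => mul_nonneg (pow_nonneg hγ.1.le k) (trajDist_nonneg hp hν hπ.1 k x a))
    (fun k => by
      have h1 := trajDist_le_one hp hν hπ k x a
      have h2 : (0:ℝ) ≤ γ ^ k := pow_nonneg hγ.1.le k
      nlinarith)
    (summable_geometric_of_lt_one hγ.1.le hγ.2)

lemma occupancy_nonneg (hγ : γ ∈ Set.Ioo (0:ℝ) 1) (hp : IsKernel p) (hν : IsDist ν₀)
    (hπ : IsPolicy π) (x : X) (a : A) : 0 ≤ occupancy γ p ν₀ π x a :=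
  mul_nonneg (by linarith [hγ.2]) (tsum_nonneg fun k =>
    mul_nonneg (pow_nonneg hγ.1.le k) (trajDist_nonneg hp hν hπ.1 k x a))

lemma occupancy_marginal (hγ : γ ∈ Set.Ioo (0:ℝ) 1) (hp : IsKernel p) (hν : IsDist ν₀)
    (hπ : IsPolicy π) (x : X) :
    ∑ b, occupancy γ p ν₀ π x b
      = (1 - γ) * ∑' k : ℕ, γ ^ k * ∑ b, trajDist p ν₀ π k x b := by
  unfold occupancy
  rw [← Finset.mul_sum, ← Summable.tsum_finsetSum (fun b _ => summable_traj hγ hp hν hπ x b)]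
  congr 1
  exact tsum_congr fun k => (Finset.mul_sum _ _ _).symm

lemma summable_traj_marg (hγ : γ ∈ Set.Ioo (0:ℝ) 1) (hp : IsKernel p) (hν : IsDist ν₀)
    (hπ : IsPolicy π) (x : X) :
    Summable fun k => γ ^ k * ∑ b, trajDist p ν₀ π k x b := by
  have : (fun k => γ ^ k * ∑ b, trajDist p ν₀ π k x b)
      = fun k => ∑ b, γ ^ k * trajDist p ν₀ π k x b := by
    funext k; exact Finset.mul_sum _ _ _
  rw [this]
  exact summable_sum fun b _ => summable_traj hγ hp hν hπ x b

lemma occupancy_flow (hγ : γ ∈ Set.Ioo (0:ℝ) 1) (hp : IsKernel p) (hν : IsDist ν₀)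
    (hπ : IsPolicy π) (x : X) :
    ∑ a, occupancy γ p ν₀ π x a
      = (1 - γ) * ν₀ x + γ * ∑ x', ∑ a', p x' a' x * occupancy γ p ν₀ π x' a' := by
  have hsum : ∀ (y : X) (b : A), Summable fun k => γ ^ k * trajDist p ν₀ π k y b :=
    fun y b => summable_traj hγ hp hν hπ y b
  have key : ∑' k : ℕ, γ ^ k * ∑ a, trajDist p ν₀ π k x a
      = ν₀ x + γ * ∑ x', ∑ a', p x' a' x * ∑' k : ℕ, γ ^ k * trajDist p ν₀ π k x' a' := by
    rw [Summable.tsum_eq_zero_add (summable_traj_marg hγ hp hν hπ x)]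
    congr 1
    · simp only [trajDist, pow_zero, one_mul, ← Finset.mul_sum, hπ.2 x, mul_one]
    · have h1 : ∀ k : ℕ, γ ^ (k+1) * ∑ a, trajDist p ν₀ π (k+1) x a
          = ∑ x', ∑ a', γ * (p x' a' x * (γ ^ k * trajDist p ν₀ π k x' a')) := by
        intro k
        have e : ∑ a, trajDist p ν₀ π (k+1) x a
            = ∑ x', ∑ a', trajDist p ν₀ π k x' a' * p x' a' x := by
          simp only [trajDist, ← Finset.mul_sum, hπ.2 x, mul_one]
        rw [e, Finset.mul_sum]
        refine Finset.sum_congr rfl fun x' _ => ?_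
        rw [Finset.mul_sum]
        refine Finset.sum_congr rfl fun a' _ => ?_
        ring
      calc ∑' k : ℕ, γ ^ (k+1) * ∑ a, trajDist p ν₀ π (k+1) x a
          = ∑' k : ℕ, ∑ x', ∑ a', γ * (p x' a' x * (γ ^ k * trajDist p ν₀ π k x' a')) :=
            tsum_congr h1
        _ = ∑ x', ∑' k : ℕ, ∑ a', γ * (p x' a' x * (γ ^ k * trajDist p ν₀ π k x' a')) := by
            refine Summable.tsum_finsetSum fun x' _ => ?_
            exact summable_sum fun a' _ => (((hsum x' a').mul_left _).mul_left _)
        _ = ∑ x', ∑ a', ∑' k : ℕ, γ * (p x' a' x * (γ ^ k * trajDist p ν₀ π k x' a')) := by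
            refine Finset.sum_congr rfl fun x' _ => ?_
            exact Summable.tsum_finsetSum fun a' _ => (((hsum x' a').mul_left _).mul_left _)
        _ = ∑ x', ∑ a', γ * (p x' a' x * ∑' k : ℕ, γ ^ k * trajDist p ν₀ π k x' a') := by
            refine Finset.sum_congr rfl fun x' _ => Finset.sum_congr rfl fun a' _ => ?_
            rw [tsum_mul_left, tsum_mul_left]
        _ = γ * ∑ x', ∑ a', p x' a' x * ∑' k : ℕ, γ ^ k * trajDist p ν₀ π k x' a' := by
            simp only [← Finset.mul_sum]
  rw [occupancy_marginal hγ hp hν hπ x, key]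
  have h2 : ∑ x', ∑ a', p x' a' x * occupancy γ p ν₀ π x' a'
      = (1-γ) * ∑ x', ∑ a', p x' a' x * ∑' k : ℕ, γ ^ k * trajDist p ν₀ π k x' a' := by
    rw [Finset.mul_sum]
    refine Finset.sum_congr rfl fun x' _ => ?_
    rw [Finset.mul_sum]
    refine Finset.sum_congr rfl fun a' _ => ?_
    unfold occupancy
    ring
  rw [h2]
  ring

lemma trajDist_factor (hπ : IsPolicy π) (k : ℕ) (x : X) (a : A) :
    trajDist p ν₀ π k x a = (∑ b, trajDist p ν₀ π k x b) * π x a := by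
  cases k with
  | zero => simp [trajDist, ← Finset.mul_sum, hπ.2 x]
  | succ k => simp [trajDist, ← Finset.mul_sum, hπ.2 x]

lemma occupancy_factor (hγ : γ ∈ Set.Ioo (0:ℝ) 1) (hp : IsKernel p) (hν : IsDist ν₀)
    (hπ : IsPolicy π) (x : X) (a : A) :
    occupancy γ p ν₀ π x a = (∑ b, occupancy γ p ν₀ π x b) * π x a := by
  rw [occupancy_marginal hγ hp hν hπ x]
  unfold occupancy
  calc (1 - γ) * ∑' k : ℕ, γ ^ k * trajDist p ν₀ π k x a
      = (1 - γ) * ∑' k : ℕ, (γ ^ k * ∑ b, trajDist p ν₀ π k x b) * π x a := by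
        congr 1
        refine tsum_congr fun k => ?_
        rw [trajDist_factor hπ k x a]; ring
    _ = (1 - γ) * ((∑' k : ℕ, γ ^ k * ∑ b, trajDist p ν₀ π k x b) * π x a) := by
        rw [tsum_mul_right]
    _ = (1 - γ) * (∑' k : ℕ, γ ^ k * ∑ b, trajDist p ν₀ π k x b) * π x a := by ring

lemma flow_unique (hγ : γ ∈ Set.Ioo (0:ℝ) 1) {q : X → X → ℝ} {ν : X → ℝ}
    (hq0 : ∀ x' x, 0 ≤ q x' x) (hq1 : ∀ x', ∑ x, q x' x = 1) {ρ σ : X → ℝ}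
    (hρ : ∀ x, ρ x = (1-γ) * ν x + γ * ∑ x', ρ x' * q x' x)
    (hσ : ∀ x, σ x = (1-γ) * ν x + γ * ∑ x', σ x' * q x' x) : ρ = σ := by
  have hδ : ∀ x, ρ x - σ x = γ * ∑ x', (ρ x' - σ x') * q x' x := by
    intro x
    have hsub : ∑ x', (ρ x' - σ x') * q x' x
        = ∑ x', ρ x' * q x' x - ∑ x', σ x' * q x' x := by
      rw [← Finset.sum_sub_distrib]
      exact Finset.sum_congr rfl fun x' _ => sub_mul _ _ _
    rw [hρ x, hσ x, hsub]; ring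
  set S := ∑ x, |ρ x - σ x| with hSdef
  have hS : S ≤ γ * S := by
    calc S = ∑ x, |γ * ∑ x', (ρ x' - σ x') * q x' x| := by
          exact Finset.sum_congr rfl fun x _ => by rw [hδ x]
      _ = ∑ x, γ * |∑ x', (ρ x' - σ x') * q x' x| := by
          refine Finset.sum_congr rfl fun x _ => ?_
          rw [abs_mul, abs_of_nonneg hγ.1.le]
      _ ≤ ∑ x, γ * ∑ x', |ρ x' - σ x'| * q x' x := by
          refine Finset.sum_le_sum fun x _ => ?_
          refine mul_le_mul_of_nonneg_left ?_ hγ.1.le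
          calc |∑ x', (ρ x' - σ x') * q x' x| ≤ ∑ x', |(ρ x' - σ x') * q x' x| :=
                Finset.abs_sum_le_sum_abs _ _
            _ = ∑ x', |ρ x' - σ x'| * q x' x := by
                refine Finset.sum_congr rfl fun x' _ => ?_
                rw [abs_mul, abs_of_nonneg (hq0 x' x)]
      _ = γ * ∑ x', |ρ x' - σ x'| * ∑ x, q x' x := by
          rw [← Finset.mul_sum]
          congr 1
          rw [Finset.sum_comm]
          exact Finset.sum_congr rfl fun x' _ => (Finset.mul_sum _ _ _).symm
      _ = γ * S := by simp only [hq1, mul_one, hSdef]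
  have hS0 : 0 ≤ S := Finset.sum_nonneg fun x _ => abs_nonneg _
  have hSz : S = 0 := by
    by_contra hne
    have hpos : 0 < S := lt_of_le_of_ne hS0 (Ne.symm hne)
    have := mul_lt_mul_of_pos_right hγ.2 hpos
    rw [one_mul] at this
    linarith
  funext x
  have hx : |ρ x - σ x| = 0 :=
    (Finset.sum_eq_zero_iff_of_nonneg (fun y _ => abs_nonneg (ρ y - σ y))).mp hSz x
      (Finset.mem_univ x)
  have := abs_eq_zero.mp hx
  linarith [sub_eq_zero.mp this]

lemma exists_policy_occ [Nonempty A] (hγ : γ ∈ Set.Ioo (0:ℝ) 1) (hp : IsKernel p)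
    (hν : IsDist ν₀) (μ : X → A → ℝ) (hμ0 : ∀ x a, 0 ≤ μ x a)
    (hflow : ∀ x, ∑ a, μ x a = (1 - γ) * ν₀ x + γ * ∑ x', ∑ a', p x' a' x * μ x' a') :
    ∃ π : X → A → ℝ, IsPolicy π ∧ μ = occupancy γ p ν₀ π := by
  classical
  set ρ : X → ℝ := fun x => ∑ b, μ x b with hρdef
  set π : X → A → ℝ := fun x a => if ρ x = 0 then (Fintype.card A : ℝ)⁻¹ else μ x a / ρ x
    with hπdef
  have hρ0 : ∀ x, 0 ≤ ρ x := fun x => Finset.sum_nonneg fun b _ => hμ0 x b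
  have hcard : (0:ℝ) < (Fintype.card A : ℝ) := by
    exact_mod_cast Fintype.card_pos
  have hπpol : IsPolicy π := by
    constructor
    · intro x a
      by_cases h : ρ x = 0
      · simp only [hπdef, h, if_true]
        positivity
      · simp only [hπdef, h, if_false]
        exact div_nonneg (hμ0 x a) (hρ0 x)
    · intro x
      by_cases h : ρ x = 0
      · simp only [hπdef, h, if_true]
        rw [Finset.sum_const, Finset.card_univ, nsmul_eq_mul]
        field_simp
      · simp only [hπdef, h, if_false]
        rw [← Finset.sum_div]
        exact div_self h
  have hfact : ∀ x a, μ x a = ρ x * π x a := by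
    intro x a
    by_cases h : ρ x = 0
    · have h1 : μ x a ≤ ρ x := Finset.single_le_sum (fun b _ => hμ0 x b) (Finset.mem_univ a)
      have h2 : μ x a = 0 := le_antisymm (h ▸ h1) (hμ0 x a)
      rw [h2, h]; ring
    · simp only [hπdef, h, if_false]
      field_simp
  set q : X → X → ℝ := fun x' x => ∑ a, π x' a * p x' a x with hqdef
  have hq0 : ∀ x' x, 0 ≤ q x' x := fun x' x =>
    Finset.sum_nonneg fun a _ => mul_nonneg (hπpol.1 x' a) (hp.1 x' a x)
  have hq1 : ∀ x', ∑ x, q x' x = 1 := by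
    intro x'
    simp only [hqdef]
    calc ∑ x, ∑ a, π x' a * p x' a x = ∑ a, ∑ x, π x' a * p x' a x := Finset.sum_comm
      _ = ∑ a, π x' a * ∑ x, p x' a x := by simp [Finset.mul_sum]
      _ = 1 := by simp only [hp.2, mul_one]; exact hπpol.2 x'
  have hρfix : ∀ x, ρ x = (1-γ) * ν₀ x + γ * ∑ x', ρ x' * q x' x := by
    intro x
    have h3 : ∑ x', ρ x' * q x' x = ∑ x', ∑ a', p x' a' x * μ x' a' := by
      refine Finset.sum_congr rfl fun x' _ => ?_
      simp only [hqdef]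
      rw [Finset.mul_sum]
      refine Finset.sum_congr rfl fun a' _ => ?_
      rw [hfact x' a']; ring
    rw [h3]
    exact hflow x
  have hσfix : ∀ x, (∑ b, occupancy γ p ν₀ π x b)
      = (1-γ) * ν₀ x + γ * ∑ x', (∑ b, occupancy γ p ν₀ π x' b) * q x' x := by
    intro x
    have h2 : ∑ x', ∑ a', p x' a' x * occupancy γ p ν₀ π x' a'
        = ∑ x', (∑ b, occupancy γ p ν₀ π x' b) * q x' x := by
      refine Finset.sum_congr rfl fun x' _ => ?_
      simp only [hqdef]
      rw [Finset.mul_sum]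
      refine Finset.sum_congr rfl fun a' _ => ?_
      rw [occupancy_factor hγ hp hν hπpol x' a']; ring
    rw [← h2]
    exact occupancy_flow hγ hp hν hπpol x
  have hρσ : ρ = fun x => ∑ b, occupancy γ p ν₀ π x b :=
    flow_unique hγ hq0 hq1 hρfix hσfix
  refine ⟨π, hπpol, ?_⟩
  funext x a
  rw [hfact x a, occupancy_factor hγ hp hν hπpol x a, congrFun hρσ x]

end Aux

section LinAux

variable [Fintype X] [Fintype A] {d : ℕ}

lemma dotp_psi_featOcc {p : X → A → X → ℝ} (φ : X → A → Fin d → ℝ) (ψ : X → Fin d → ℝ)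
    (hplin : ∀ x a x', p x a x' = dotp (φ x a) (ψ x')) (μ : X → A → ℝ) (x : X) :
    dotp (ψ x) (featOcc φ μ) = ∑ x', ∑ a', p x' a' x * μ x' a' := by
  have hfeat : ∀ i, featOcc φ μ i = ∑ x', ∑ a', μ x' a' * φ x' a' i := by
    intro i
    simp [featOcc, Finset.sum_apply]
  simp only [hplin, dotp, hfeat]
  calc ∑ i, ψ x i * ∑ x', ∑ a', μ x' a' * φ x' a' i
      = ∑ i, ∑ x', ∑ a', ψ x i * (μ x' a' * φ x' a' i) := by
        refine Finset.sum_congr rfl fun i _ => ?_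
        rw [Finset.mul_sum]
        refine Finset.sum_congr rfl fun x' _ => ?_
        rw [Finset.mul_sum]
    _ = ∑ x', ∑ i, ∑ a', ψ x i * (μ x' a' * φ x' a' i) := Finset.sum_comm
    _ = ∑ x', ∑ a', ∑ i, ψ x i * (μ x' a' * φ x' a' i) :=
        Finset.sum_congr rfl fun x' _ => Finset.sum_comm
    _ = ∑ x', ∑ a', (∑ i, φ x' a' i * ψ x i) * μ x' a' := by
        refine Finset.sum_congr rfl fun x' _ => Finset.sum_congr rfl fun a' _ => ?_
        rw [Finset.sum_mul]
        refine Finset.sum_congr rfl fun i _ => ?_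
        ring

lemma sum_mul_r_eq_dotp {r : X → A → ℝ} (φ : X → A → Fin d → ℝ) (omg : Fin d → ℝ)
    (hrlin : ∀ x a, r x a = dotp (φ x a) omg) (μ : X → A → ℝ) :
    ∑ x, ∑ a, μ x a * r x a = dotp (featOcc φ μ) omg := by
  have hfeat : ∀ i, featOcc φ μ i = ∑ x, ∑ a, μ x a * φ x a i := by
    intro i
    simp [featOcc, Finset.sum_apply]
  simp only [hrlin, dotp, hfeat]
  calc ∑ x, ∑ a, μ x a * ∑ i, φ x a i * omg i
      = ∑ x, ∑ a, ∑ i, μ x a * (φ x a i * omg i) := by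
        refine Finset.sum_congr rfl fun x _ => Finset.sum_congr rfl fun a _ => ?_
        rw [Finset.mul_sum]
    _ = ∑ x, ∑ i, ∑ a, μ x a * (φ x a i * omg i) :=
        Finset.sum_congr rfl fun x _ => Finset.sum_comm
    _ = ∑ i, ∑ x, ∑ a, μ x a * (φ x a i * omg i) := Finset.sum_comm
    _ = ∑ i, (∑ x, ∑ a, μ x a * φ x a i) * omg i := by
        refine Finset.sum_congr rfl fun i _ => ?_
        rw [Finset.sum_mul]
        refine Finset.sum_congr rfl fun x _ => ?_
        rw [Finset.sum_mul]
        refine Finset.sum_congr rfl fun a _ => ?_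
        ring

end LinAux

/-- in a linear MDP, the `μ`-components of the relaxed primal feasible set
coincide with the feasible set of the original primal LP (the valid discounted state-action
occupancy measures), and every maximizer of `⟨λ, ω⟩` over `M^P_Φ` has a `μ`-component which
is the occupancy measure of an optimal policy. -/
theorem statement10 {X A : Type*} [Fintype X] [Fintype A] {d : ℕ}
    (γ : ℝ) (hγ : γ ∈ Set.Ioo (0 : ℝ) 1)
    (p : X → A → X → ℝ) (hp : IsKernel p)
    (r : X → A → ℝ) (ν₀ : X → ℝ) (hν₀ : IsDist ν₀)
    (φ : X → A → Fin d → ℝ) (ψ : X → Fin d → ℝ) (omg : Fin d → ℝ)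
    (hplin : ∀ x a x', p x a x' = dotp (φ x a) (ψ x'))
    (hrlin : ∀ x a, r x a = dotp (φ x a) omg) :
    ({μv : X → A → ℝ | ∃ lam : Fin d → ℝ, MPfeas γ ν₀ φ ψ lam μv}
      = {μv : X → A → ℝ | (∀ x a, 0 ≤ μv x a) ∧
          ∀ x, ∑ a, μv x a = (1 - γ) * ν₀ x + γ * ∑ x', ∑ a', p x' a' x * μv x' a'})
    ∧
    (∀ (lamstar : Fin d → ℝ) (μstar : X → A → ℝ),
      MPfeas γ ν₀ φ ψ lamstar μstar →
      (∀ (lam : Fin d → ℝ) (μv : X → A → ℝ),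
        MPfeas γ ν₀ φ ψ lam μv → dotp lam omg ≤ dotp lamstar omg) →
      ∃ πo : X → A → ℝ, IsPolicy πo ∧
        (∀ π' : X → A → ℝ, IsPolicy π' → ret γ p ν₀ r π' ≤ ret γ p ν₀ r πo) ∧
        μstar = occupancy γ p ν₀ πo) := by
  have hfwd : ∀ (lam : Fin d → ℝ) (μv : X → A → ℝ), MPfeas γ ν₀ φ ψ lam μv →
      (∀ x a, 0 ≤ μv x a) ∧
        ∀ x, ∑ a, μv x a = (1 - γ) * ν₀ x + γ * ∑ x', ∑ a', p x' a' x * μv x' a' := by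
    rintro lam μv ⟨h0, h1, h2⟩
    refine ⟨h0, fun x => ?_⟩
    rw [h1 x, h2, dotp_psi_featOcc φ ψ hplin μv x]
  have hbwd : ∀ μv : X → A → ℝ, (∀ x a, 0 ≤ μv x a) →
      (∀ x, ∑ a, μv x a = (1 - γ) * ν₀ x + γ * ∑ x', ∑ a', p x' a' x * μv x' a') →
      MPfeas γ ν₀ φ ψ (featOcc φ μv) μv := by
    intro μv h0 h1
    exact ⟨h0, fun x => by rw [dotp_psi_featOcc φ ψ hplin μv x]; exact h1 x, rfl⟩
  constructor
  · ext μv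
    simp only [Set.mem_setOf_eq]
    constructor
    · rintro ⟨lam, hf⟩
      exact hfwd lam μv hf
    · rintro ⟨h0, h1⟩
      exact ⟨featOcc φ μv, hbwd μv h0 h1⟩
  · intro lamstar μstar hfeas hmax
    have hA : Nonempty A := by
      by_contra hA
      rw [not_nonempty_iff] at hA
      have h := (hfwd _ _ hfeas).2
      have hz : ∀ x, (0:ℝ) = (1 - γ) * ν₀ x := by
        intro x
        simpa using h x
      have hcontra : (0:ℝ) = 1 - γ := by
        calc (0:ℝ) = ∑ x, (0:ℝ) := by simp
          _ = ∑ x, (1 - γ) * ν₀ x := Finset.sum_congr rfl fun x _ => hz x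
          _ = (1 - γ) * ∑ x, ν₀ x := (Finset.mul_sum _ _ _).symm
          _ = 1 - γ := by rw [hν₀.2, mul_one]
      have := hγ.2
      linarith
    haveI := hA
    obtain ⟨h0, h1⟩ := hfwd _ _ hfeas
    obtain ⟨πo, hπo, hμo⟩ := exists_policy_occ hγ hp hν₀ μstar h0 h1
    refine ⟨πo, hπo, ?_, hμo⟩
    intro π' hπ'
    have hfeas' : MPfeas γ ν₀ φ ψ (featOcc φ (occupancy γ p ν₀ π')) (occupancy γ p ν₀ π') := by
      refine hbwd _ (fun x a => occupancy_nonneg hγ hp hν₀ hπ' x a) ?_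
      exact fun x => occupancy_flow hγ hp hν₀ hπ' x
    have hle := hmax _ _ hfeas'
    have e1 : ret γ p ν₀ r π' = dotp (featOcc φ (occupancy γ p ν₀ π')) omg :=
      sum_mul_r_eq_dotp φ omg hrlin _
    have e2 : ret γ p ν₀ r πo = dotp lamstar omg := by
      unfold ret
      rw [← hμo, sum_mul_r_eq_dotp φ omg hrlin, hfeas.2.2]
    rw [e1, e2]
    exact hle

end Paper
end
end

section
/- In a linear MDP, the set V = {v : (v,θ) ∈ M^D_Φ} of v-components of feasible points of the relaxed dual LP coincides with the feasible set {v : Ev ⪰ r + γPv} of the original dual LP. Furthermore, the optimal value function v^{π*} together with the parameter vector θ^{π*} satisfying q^{π*} = Φθ^{π*} is a minimizer of (1−γ)⟨ν₀, v⟩ over M^D_Φ. -/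
noncomputable section
open MeasureTheory Finset Matrix
open scoped BigOperators ENNReal

namespace Paper

variable {X A : Type*}

/-- The feasible set of the relaxed dual LP (4). -/
def MDfeas {X A : Type*} [Fintype X] [Fintype A] {d : ℕ}
    (γ : ℝ) (φ : X → A → Fin d → ℝ) (ψ : X → Fin d → ℝ) (omg : Fin d → ℝ)
    (v : X → ℝ) (θv : Fin d → ℝ) : Prop :=
  (∀ x a, dotp (φ x a) θv ≤ v x) ∧ θv = omg + γ • psiApply ψ v

section Aux

variable [Fintype X] [Fintype A] [DecidableEq X]

lemma kernelPow_nonneg {p : X → A → X → ℝ} {π : X → A → ℝ}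
    (hp : IsKernel p) (hπ : IsPolicy π) :
    ∀ k x y, 0 ≤ kernelPow p π k x y := by
  intro k
  induction k with
  | zero =>
    intro x y
    simp only [kernelPow]
    split <;> norm_num
  | succ k ih =>
    intro x y
    refine Finset.sum_nonneg fun z _ => mul_nonneg (ih x z) ?_
    exact Finset.sum_nonneg fun a _ => mul_nonneg (hπ.1 z a) (hp.1 z a y)

lemma kernelPow_rowsum {p : X → A → X → ℝ} {π : X → A → ℝ}
    (hp : IsKernel p) (hπ : IsPolicy π) :
    ∀ k x, ∑ y, kernelPow p π k x y = 1 := by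
  intro k
  induction k with
  | zero => intro x; simp [kernelPow]
  | succ k ih =>
    intro x
    simp only [kernelPow]
    rw [Finset.sum_comm]
    have : ∀ z : X, ∑ y, kernelPow p π k x z * ∑ a, π z a * p z a y
        = kernelPow p π k x z := by
      intro z
      rw [← Finset.mul_sum, Finset.sum_comm]
      have : ∑ a, ∑ y, π z a * p z a y = 1 := by
        have : ∀ a : A, ∑ y, π z a * p z a y = π z a := by
          intro a; rw [← Finset.mul_sum, hp.2 z a, mul_one]
        rw [Finset.sum_congr rfl fun a _ => this a, hπ.2 z]
      rw [this, mul_one]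
    rw [Finset.sum_congr rfl fun z _ => this z, ih x]

lemma kernelPow_succ_left (p : X → A → X → ℝ) (π : X → A → ℝ) :
    ∀ (k : ℕ) (x y : X), kernelPow p π (k+1) x y
      = ∑ z, (∑ a, π x a * p x a z) * kernelPow p π k z y := by
  intro k
  induction k with
  | zero =>
    intro x y
    simp [kernelPow]
  | succ k ih =>
    intro x y
    show ∑ z, kernelPow p π (k+1) x z * ∑ a, π z a * p z a y = _
    calc ∑ z, kernelPow p π (k+1) x z * ∑ a, π z a * p z a y
        = ∑ z, (∑ w, (∑ a, π x a * p x a w) * kernelPow p π k w z)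
            * ∑ a, π z a * p z a y := by
          refine Finset.sum_congr rfl fun z _ => ?_; rw [ih]
      _ = ∑ w, (∑ a, π x a * p x a w)
            * ∑ z, kernelPow p π k w z * ∑ a, π z a * p z a y := by
          simp only [Finset.sum_mul]
          rw [Finset.sum_comm]
          simp only [Finset.mul_sum, mul_assoc]
          refine Finset.sum_congr rfl fun w _ => ?_
          rw [Finset.sum_comm]
      _ = ∑ z, (∑ a, π x a * p x a z) * kernelPow p π (k+1) z y := rfl

lemma vval_summable {γ : ℝ} (hγ0 : 0 ≤ γ) (hγ1 : γ < 1)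
    {p : X → A → X → ℝ} (hp : IsKernel p) {π : X → A → ℝ} (hπ : IsPolicy π)
    (r : X → A → ℝ) (x : X) :
    Summable (fun k : ℕ => γ ^ k * ∑ y, kernelPow p π k x y * ∑ a, π y a * r y a) := by
  set C : ℝ := ∑ y, |∑ a, π y a * r y a| with hC
  have hbound : ∀ k, ‖γ ^ k * ∑ y, kernelPow p π k x y * ∑ a, π y a * r y a‖
      ≤ C * γ ^ k := by
    intro k
    rw [norm_mul, Real.norm_eq_abs, Real.norm_eq_abs, abs_pow, abs_of_nonneg hγ0,
      mul_comm (C) (γ ^ k)]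
    refine mul_le_mul_of_nonneg_left ?_ (pow_nonneg hγ0 k)
    calc |∑ y, kernelPow p π k x y * ∑ a, π y a * r y a|
        ≤ ∑ y, |kernelPow p π k x y * ∑ a, π y a * r y a| := Finset.abs_sum_le_sum_abs _ _
      _ ≤ C := by
          rw [hC]
          refine Finset.sum_le_sum fun y _ => ?_
          rw [abs_mul, abs_of_nonneg (kernelPow_nonneg hp hπ k x y)]
          have h1 : kernelPow p π k x y ≤ 1 := by
            rw [← kernelPow_rowsum hp hπ k x]
            exact Finset.single_le_sum (fun z _ => kernelPow_nonneg hp hπ k x z)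
              (Finset.mem_univ y)
          nlinarith [abs_nonneg (∑ a, π y a * r y a), kernelPow_nonneg hp hπ k x y]
  exact Summable.of_norm_bounded
    ((summable_geometric_of_lt_one hγ0 hγ1).mul_left C) hbound

lemma vval_bellman {γ : ℝ} (hγ0 : 0 ≤ γ) (hγ1 : γ < 1)
    {p : X → A → X → ℝ} (hp : IsKernel p) {π : X → A → ℝ} (hπ : IsPolicy π)
    (r : X → A → ℝ) (x : X) :
    vval γ r p π x = ∑ a, π x a * (r x a + γ * ∑ y, p x a y * vval γ r p π y) := by
  have hs : ∀ z : X, Summable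
      (fun k : ℕ => γ ^ k * ∑ y, kernelPow p π k z y * ∑ a, π y a * r y a) :=
    fun z => vval_summable hγ0 hγ1 hp hπ r z
  set g : ℕ → X → ℝ := fun k z => ∑ y, kernelPow p π k z y * ∑ a, π y a * r y a with hg
  have h0 : g 0 x = ∑ a, π x a * r x a := by simp [hg, kernelPow]
  have hstep : ∀ (k : ℕ) (z : X), g (k+1) z = ∑ w, (∑ a, π z a * p z a w) * g k w := by
    intro k z
    calc g (k+1) z
        = ∑ y, (∑ w, (∑ a, π z a * p z a w) * kernelPow p π k w y)
            * ∑ a, π y a * r y a := by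
          refine Finset.sum_congr rfl fun y _ => ?_
          rw [kernelPow_succ_left]
      _ = ∑ w, (∑ a, π z a * p z a w) * g k w := by
          simp only [Finset.sum_mul]
          rw [Finset.sum_comm]
          simp only [hg, Finset.mul_sum, mul_assoc]
          refine Finset.sum_congr rfl fun w _ => ?_
          rw [Finset.sum_comm]
  have hv : ∀ z, vval γ r p π z = ∑' k, γ ^ k * g k z := fun z => rfl
  rw [hv x, Summable.tsum_eq_zero_add (hs x)]
  have h1 : (fun k : ℕ => γ ^ (k+1) * g (k+1) x)
      = fun k => ∑ w, (∑ a, π x a * p x a w) * (γ * (γ ^ k * g k w)) := by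
    funext k
    rw [hstep, Finset.mul_sum]
    exact Finset.sum_congr rfl fun w _ => by ring
  rw [h1, Summable.tsum_finsetSum (fun w _ => (((hs w).mul_left γ).mul_left _))]
  have h2 : ∀ w : X, ∑' k : ℕ, (∑ a, π x a * p x a w) * (γ * (γ ^ k * g k w))
      = (∑ a, π x a * p x a w) * (γ * vval γ r p π w) := by
    intro w
    rw [tsum_mul_left, tsum_mul_left, hv w]
  rw [Finset.sum_congr rfl fun w _ => h2 w]
  rw [pow_zero, one_mul]
  have h0' : ∑ y, kernelPow p π 0 x y * ∑ a, π y a * r y a = ∑ a, π x a * r x a := h0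
  rw [h0']
  simp only [mul_add, Finset.sum_add_distrib, Finset.sum_mul, Finset.mul_sum]
  congr 1
  rw [Finset.sum_comm]
  refine Finset.sum_congr rfl fun a _ => Finset.sum_congr rfl fun w _ => by ring

lemma dot_identity {d : ℕ} (γ : ℝ) (p : X → A → X → ℝ) (r : X → A → ℝ)
    (φ : X → A → Fin d → ℝ) (ψ : X → Fin d → ℝ) (omg : Fin d → ℝ)
    (hplin : ∀ x a x', p x a x' = dotp (φ x a) (ψ x'))
    (hrlin : ∀ x a, r x a = dotp (φ x a) omg)
    (v : X → ℝ) (x : X) (a : A) :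
    dotp (φ x a) (omg + γ • psiApply ψ v) = r x a + γ * ∑ x', p x a x' * v x' := by
  simp only [dotp, psiApply, hrlin, hplin, Pi.add_apply, Pi.smul_apply, smul_eq_mul,
    Finset.sum_apply, Finset.mul_sum, Finset.sum_add_distrib, mul_add]
  congr 1
  rw [Finset.sum_comm]
  refine Finset.sum_congr rfl fun x' _ => ?_
  simp only [Finset.sum_mul, Finset.mul_sum]
  exact Finset.sum_congr rfl fun i _ => by ring

lemma sum_weighted_le {γ : ℝ} (hγ0 : 0 ≤ γ)
    {p : X → A → X → ℝ} (hp : IsKernel p) {π : X → A → ℝ} (hπ : IsPolicy π)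
    {u : X → ℝ} {m : ℝ} (hmax : ∀ z, u z ≤ m) (y : X) :
    γ * ∑ b, π y b * ∑ z, p y b z * u z ≤ γ * m := by
  refine mul_le_mul_of_nonneg_left ?_ hγ0
  have hb : ∀ b, ∑ z, p y b z * u z ≤ m := by
    intro b
    calc ∑ z, p y b z * u z ≤ ∑ z, p y b z * m :=
          Finset.sum_le_sum fun z _ => mul_le_mul_of_nonneg_left (hmax z) (hp.1 y b z)
      _ = m := by rw [← Finset.sum_mul, hp.2 y b, one_mul]
  calc ∑ b, π y b * ∑ z, p y b z * u z ≤ ∑ b, π y b * m :=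
        Finset.sum_le_sum fun b _ => mul_le_mul_of_nonneg_left (hb b) (hπ.1 y b)
    _ = m := by rw [← Finset.sum_mul, hπ.2 y, one_mul]

lemma qval_le_vval {γ : ℝ} (hγ0 : 0 < γ) (hγ1 : γ < 1)
    {p : X → A → X → ℝ} (hp : IsKernel p) (r : X → A → ℝ)
    {πstar : X → A → ℝ} (hπstar : IsPolicy πstar)
    (hopt : ∀ π' : X → A → ℝ, IsPolicy π' → ∀ x, vval γ r p π' x ≤ vval γ r p πstar x)
    (x : X) (a : A) : qval γ r p πstar x a ≤ vval γ r p πstar x := by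
  classical
  set π' : X → A → ℝ :=
    fun y b => if y = x then (if b = a then 1 else 0) else πstar y b with hπ'def
  have hπ' : IsPolicy π' := by
    constructor
    · intro y b
      simp only [hπ'def]
      split
      · split <;> norm_num
      · exact hπstar.1 y b
    · intro y
      simp only [hπ'def]
      split
      · simp
      · exact hπstar.2 y
  set w : X → ℝ := vval γ r p π' with hw
  set vs : X → ℝ := vval γ r p πstar with hvs
  set u : X → ℝ := fun y => vs y - w y with hu
  have hu0 : ∀ y, 0 ≤ u y := fun y => sub_nonneg.2 (hopt π' hπ' y)
  obtain ⟨y0, -, hy0⟩ := Finset.exists_max_image Finset.univ u ⟨x, Finset.mem_univ x⟩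
  set m := u y0 with hm
  have hmax : ∀ y, u y ≤ m := fun y => hy0 y (Finset.mem_univ y)
  have hm0 : 0 ≤ m := le_trans (hu0 x) (hmax x)
  have hwx : w x = r x a + γ * ∑ z, p x a z * w z := by
    rw [hw, vval_bellman hγ0.le hγ1 hp hπ' r x]
    have : ∀ b, π' x b * (r x b + γ * ∑ z, p x b z * vval γ r p π' z)
        = (if b = a then (r x b + γ * ∑ z, p x b z * vval γ r p π' z) else 0) := by
      intro b; simp only [hπ'def, if_pos rfl]; split <;> ring
    rw [Finset.sum_congr rfl fun b _ => this b, Finset.sum_ite_eq' Finset.univ a]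
    simp [hw]
  have hqx : qval γ r p πstar x a = r x a + γ * ∑ z, p x a z * vs z := rfl
  have hux : u x = (vs x - qval γ r p πstar x a) + γ * ∑ z, p x a z * u z := by
    have h2 : ∑ z, p x a z * u z = ∑ z, p x a z * vs z - ∑ z, p x a z * w z := by
      rw [← Finset.sum_sub_distrib]
      exact Finset.sum_congr rfl fun z _ => by simp only [hu]; ring
    simp only [hu]
    rw [hwx, hqx, h2]; ring
  have hsum_le : ∑ z, p x a z * u z ≤ m := by
    calc ∑ z, p x a z * u z ≤ ∑ z, p x a z * m :=
          Finset.sum_le_sum fun z _ => mul_le_mul_of_nonneg_left (hmax z) (hp.1 x a z)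
      _ = m := by rw [← Finset.sum_mul, hp.2 x a, one_mul]
  by_cases hxy : y0 = x
  · -- m = u x
    have h1 : m = (vs x - qval γ r p πstar x a) + γ * ∑ z, p x a z * u z := by
      rw [hm, hxy]; exact hux
    have h2 : γ * ∑ z, p x a z * u z ≤ γ * m :=
      mul_le_mul_of_nonneg_left hsum_le hγ0.le
    nlinarith
  · -- at y0 ≠ x the πstar-Bellman applies to both
    have hwy : w y0 = ∑ b, πstar y0 b * (r y0 b + γ * ∑ z, p y0 b z * w z) := by
      rw [hw, vval_bellman hγ0.le hγ1 hp hπ' r y0]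
      refine Finset.sum_congr rfl fun b _ => ?_
      simp only [hπ'def, if_neg hxy]
    have hvy : vs y0 = ∑ b, πstar y0 b * (r y0 b + γ * ∑ z, p y0 b z * vs z) :=
      vval_bellman hγ0.le hγ1 hp hπstar r y0
    have hueq : u y0 = γ * ∑ b, πstar y0 b * ∑ z, p y0 b z * u z := by
      simp only [hu]
      rw [hvy, hwy, ← Finset.sum_sub_distrib, Finset.mul_sum]
      refine Finset.sum_congr rfl fun b _ => ?_
      have h3 : ∑ z, p y0 b z * (vs z - w z)
          = ∑ z, p y0 b z * vs z - ∑ z, p y0 b z * w z := by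
        rw [← Finset.sum_sub_distrib]
        exact Finset.sum_congr rfl fun z _ => by ring
      rw [h3]; ring
    have hle : m ≤ γ * m := by
      calc m = γ * ∑ b, πstar y0 b * ∑ z, p y0 b z * u z := by rw [hm]; exact hueq
        _ ≤ γ * m := sum_weighted_le (u := u) (m := m) hγ0.le hp hπstar hmax y0
    have hmz : m = 0 := by nlinarith
    have huz : ∀ z, u z = 0 := fun z => le_antisymm (hmz ▸ hmax z) (hu0 z)
    have hzero : ∑ z, p x a z * u z = 0 :=
      Finset.sum_eq_zero fun z _ => by rw [huz z, mul_zero]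
    have hfin : u x = vs x - qval γ r p πstar x a := by
      rw [hux, hzero]; ring
    rw [huz x] at hfin
    linarith

lemma feasible_ge_vval {γ : ℝ} (hγ0 : 0 ≤ γ) (hγ1 : γ < 1)
    {p : X → A → X → ℝ} (hp : IsKernel p) (r : X → A → ℝ)
    {πstar : X → A → ℝ} (hπstar : IsPolicy πstar)
    (v : X → ℝ) (hfeas : ∀ x a, r x a + γ * ∑ x', p x a x' * v x' ≤ v x)
    (x : X) : vval γ r p πstar x ≤ v x := by
  set u : X → ℝ := fun y => vval γ r p πstar y - v y with hu
  obtain ⟨y0, -, hy0⟩ := Finset.exists_max_image Finset.univ u ⟨x, Finset.mem_univ x⟩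
  set m := u y0 with hm
  have hmax : ∀ y, u y ≤ m := fun y => hy0 y (Finset.mem_univ y)
  have hv : v y0 = ∑ b, πstar y0 b * v y0 := by rw [← Finset.sum_mul, hπstar.2 y0, one_mul]
  have hvle : ∑ b, πstar y0 b * (r y0 b + γ * ∑ z, p y0 b z * v z) ≤ v y0 := by
    rw [hv]
    exact Finset.sum_le_sum fun b _ =>
      mul_le_mul_of_nonneg_left (hfeas y0 b) (hπstar.1 y0 b)
  have hvb : vval γ r p πstar y0 = ∑ b, πstar y0 b * (r y0 b + γ * ∑ z, p y0 b z * vval γ r p πstar z) :=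
    vval_bellman hγ0 hγ1 hp hπstar r y0
  have hkey : m ≤ γ * ∑ b, πstar y0 b * ∑ z, p y0 b z * u z := by
    have : u y0 ≤ ∑ b, πstar y0 b * (r y0 b + γ * ∑ z, p y0 b z * vval γ r p πstar z)
        - ∑ b, πstar y0 b * (r y0 b + γ * ∑ z, p y0 b z * v z) := by
      simp only [hu]
      rw [← hvb]
      linarith [hvle]
    calc m ≤ ∑ b, πstar y0 b * (r y0 b + γ * ∑ z, p y0 b z * vval γ r p πstar z)
          - ∑ b, πstar y0 b * (r y0 b + γ * ∑ z, p y0 b z * v z) := this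
      _ = γ * ∑ b, πstar y0 b * ∑ z, p y0 b z * u z := by
          rw [← Finset.sum_sub_distrib, Finset.mul_sum]
          refine Finset.sum_congr rfl fun b _ => ?_
          have h3 : ∑ z, p y0 b z * u z
              = ∑ z, p y0 b z * vval γ r p πstar z - ∑ z, p y0 b z * v z := by
            rw [← Finset.sum_sub_distrib]
            exact Finset.sum_congr rfl fun z _ => by simp only [hu]; ring
          rw [h3]; ring
  have hle : m ≤ γ * m :=
    le_trans hkey (sum_weighted_le (u := u) (m := m) hγ0 hp hπstar hmax y0)
  have hm0 : m ≤ 0 := by nlinarith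
  have := hmax x
  simp only [hu] at this
  linarith

end Aux

/-- in a linear MDP, the `v`-components of the relaxed dual feasible set
coincide with the feasible set of the original dual LP; moreover the optimal value function
`v^{π*}`, together with the parameter vector `θ^{π*} = ω + γΨv^{π*}` satisfying
`q^{π*} = Φθ^{π*}`, is a minimizer of `(1−γ)⟨ν₀, v⟩` over `M^D_Φ`. -/
theorem statement11 {X A : Type*} [Fintype X] [Fintype A] [DecidableEq X] {d : ℕ}
    (γ : ℝ) (hγ : γ ∈ Set.Ioo (0 : ℝ) 1)
    (p : X → A → X → ℝ) (hp : IsKernel p)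
    (r : X → A → ℝ) (ν₀ : X → ℝ) (hν₀ : IsDist ν₀)
    (φ : X → A → Fin d → ℝ) (ψ : X → Fin d → ℝ) (omg : Fin d → ℝ)
    (hplin : ∀ x a x', p x a x' = dotp (φ x a) (ψ x'))
    (hrlin : ∀ x a, r x a = dotp (φ x a) omg)
    (πstar : X → A → ℝ) (hπstar : IsPolicy πstar)
    (hopt : ∀ π' : X → A → ℝ, IsPolicy π' → ∀ x, vval γ r p π' x ≤ vval γ r p πstar x) :
    ({v : X → ℝ | ∃ θv : Fin d → ℝ, MDfeas γ φ ψ omg v θv}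
      = {v : X → ℝ | ∀ x a, r x a + γ * ∑ x', p x a x' * v x' ≤ v x})
    ∧
    (∀ x a, qval γ r p πstar x a
      = dotp (φ x a) (omg + γ • psiApply ψ (vval γ r p πstar)))
    ∧
    MDfeas γ φ ψ omg (vval γ r p πstar) (omg + γ • psiApply ψ (vval γ r p πstar))
    ∧
    (∀ (v : X → ℝ) (θv : Fin d → ℝ), MDfeas γ φ ψ omg v θv →
      (1 - γ) * ∑ x, ν₀ x * vval γ r p πstar x ≤ (1 - γ) * ∑ x, ν₀ x * v x) := by
  obtain ⟨hγ0, hγ1⟩ := hγ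
  have hid : ∀ (v : X → ℝ) (x : X) (a : A),
      dotp (φ x a) (omg + γ • psiApply ψ v) = r x a + γ * ∑ x', p x a x' * v x' :=
    dot_identity γ p r φ ψ omg hplin hrlin
  have hq : ∀ x a, qval γ r p πstar x a
      = dotp (φ x a) (omg + γ • psiApply ψ (vval γ r p πstar)) := by
    intro x a
    rw [hid]
    rfl
  refine ⟨?_, hq, ⟨?_, rfl⟩, ?_⟩
  · ext v
    simp only [Set.mem_setOf_eq]
    constructor
    · rintro ⟨θv, hfe, hθ⟩ x a
      have := hfe x a
      rw [hθ, hid] at this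
      exact this
    · intro hfe
      exact ⟨omg + γ • psiApply ψ v, fun x a => by rw [hid]; exact hfe x a, rfl⟩
  · intro x a
    rw [← hq x a]
    exact qval_le_vval hγ0 hγ1 hp r hπstar hopt x a
  · rintro v θv ⟨hfe, hθ⟩
    have hfeas : ∀ x a, r x a + γ * ∑ x', p x a x' * v x' ≤ v x := by
      intro x a
      have := hfe x a
      rw [hθ, hid] at this
      exact this
    refine mul_le_mul_of_nonneg_left (Finset.sum_le_sum fun x _ => ?_) (by linarith)
    exact mul_le_mul_of_nonneg_left
      (feasible_ge_vval hγ0.le hγ1 hp r hπstar v hfeas x) (hν₀.1 x)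

end Paper
end
end

section
/- Under the linear MDP conditions, the gradient g_λ(t) = ω + γΨ̂v_{θ_t,π_t} − θ_t of the estimated objective satisfies ‖Λ̂ g_λ(t)‖²_{Λ̂⁻¹} ≤ 6β(d + D_θ²) + 3d(1 + RD_θ)² + 3γ² d R² D_θ². -/
noncomputable section
open MeasureTheory Finset Matrix
open scoped BigOperators ENNReal

namespace Paper

variable {X A : Type*}

/-- Auxiliary: squared Euclidean norm as a sum. -/
def sqe {d : ℕ} (u : Fin d → ℝ) : ℝ := ∑ i, (u i) ^ 2

lemma sqe_nonneg {d : ℕ} (u : Fin d → ℝ) : 0 ≤ sqe u :=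
  Finset.sum_nonneg fun _ _ => sq_nonneg _

lemma nrm2_eq_sqrt_sqe {d : ℕ} (u : Fin d → ℝ) : nrm2 u = Real.sqrt (sqe u) := rfl

lemma sqe_le_of_nrm2_le {d : ℕ} {u : Fin d → ℝ} {C : ℝ} (h : nrm2 u ≤ C) : sqe u ≤ C ^ 2 := by
  have h0 : 0 ≤ nrm2 u := Real.sqrt_nonneg _
  have h1 : nrm2 u ^ 2 = sqe u := Real.sq_sqrt (sqe_nonneg u)
  nlinarith

lemma dotp_sq_le {d : ℕ} (u v : Fin d → ℝ) : (dotp u v) ^ 2 ≤ sqe u * sqe v := by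
  unfold dotp sqe
  exact Finset.sum_mul_sq_le_sq_mul_sq Finset.univ u v

lemma abs_dotp_le {d : ℕ} (u v : Fin d → ℝ) : |dotp u v| ≤ nrm2 u * nrm2 v := by
  calc |dotp u v| = Real.sqrt ((dotp u v) ^ 2) := (Real.sqrt_sq_eq_abs _).symm
    _ ≤ Real.sqrt (sqe u * sqe v) := Real.sqrt_le_sqrt (dotp_sq_le u v)
    _ = nrm2 u * nrm2 v := by
        rw [Real.sqrt_mul (sqe_nonneg u)]; rfl

lemma dotp_comm {d : ℕ} (u v : Fin d → ℝ) : dotp u v = dotp v u := by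
  unfold dotp; exact Finset.sum_congr rfl fun i _ => mul_comm _ _

lemma sqe_smul {d : ℕ} (c : ℝ) (u : Fin d → ℝ) : sqe (c • u) = c ^ 2 * sqe u := by
  unfold sqe
  rw [Finset.mul_sum]
  exact Finset.sum_congr rfl fun i _ => by simp [mul_pow]

lemma sqe_add3_le {d : ℕ} (a b c : Fin d → ℝ) :
    sqe (a + b + c) ≤ 3 * (sqe a + sqe b + sqe c) := by
  have h : ∀ i ∈ Finset.univ, ((a + b + c) i) ^ 2 ≤ 3 * ((a i) ^ 2 + (b i) ^ 2 + (c i) ^ 2) := by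
    intro i _
    simp only [Pi.add_apply]
    nlinarith [sq_nonneg (a i - b i), sq_nonneg (a i - c i), sq_nonneg (b i - c i)]
  calc sqe (a + b + c) ≤ ∑ i, 3 * ((a i) ^ 2 + (b i) ^ 2 + (c i) ^ 2) := Finset.sum_le_sum h
    _ = 3 * (sqe a + sqe b + sqe c) := by
        rw [← Finset.mul_sum, Finset.sum_add_distrib, Finset.sum_add_distrib]; rfl

lemma sqe_sum_le {d n : ℕ} (y : Fin n → Fin d → ℝ) :
    sqe (∑ i, y i) ≤ n * ∑ i, sqe (y i) := by
  unfold sqe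
  have hj : ∀ j ∈ Finset.univ, ((∑ i, y i) j) ^ 2 ≤ (n : ℝ) * ∑ i, (y i j) ^ 2 := by
    intro j _
    have h := Finset.sum_mul_sq_le_sq_mul_sq Finset.univ (fun _ : Fin n => (1 : ℝ))
      (fun i => y i j)
    simpa [Finset.sum_apply] using h
  calc (∑ j, ((∑ i, y i) j) ^ 2) ≤ ∑ j : Fin d, (n : ℝ) * ∑ i, (y i j) ^ 2 :=
        Finset.sum_le_sum hj
    _ = n * ∑ i, ∑ j, (y i j) ^ 2 := by rw [← Finset.mul_sum, Finset.sum_comm]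

lemma covMat_mulVec {d n : ℕ} (β : ℝ) (φi : Fin n → Fin d → ℝ) (u : Fin d → ℝ) :
    (covMat β φi) *ᵥ u = β • u + (n : ℝ)⁻¹ • ∑ i, (dotp (φi i) u) • φi i := by
  unfold covMat
  rw [Matrix.add_mulVec, Matrix.smul_mulVec, Matrix.one_mulVec,
    Matrix.smul_mulVec]
  congr 2
  ext j
  simp only [Matrix.mulVec, dotProduct, Matrix.sum_apply, Matrix.vecMulVec_apply,
    Finset.sum_apply, Pi.smul_apply, smul_eq_mul, dotp, Finset.sum_mul]
  rw [Finset.sum_comm]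
  exact Finset.sum_congr rfl fun i _ => Finset.sum_congr rfl fun k _ => by ring

lemma covMat_qf {d n : ℕ} (β : ℝ) (φi : Fin n → Fin d → ℝ) (u : Fin d → ℝ) :
    u ⬝ᵥ ((covMat β φi) *ᵥ u) = β * sqe u + (n : ℝ)⁻¹ * ∑ i, (dotp (φi i) u) ^ 2 := by
  rw [covMat_mulVec, dotProduct_add, dotProduct_smul, dotProduct_smul]
  have h1 : u ⬝ᵥ u = sqe u := by simp [dotProduct, sqe, pow_two]
  have h2 : u ⬝ᵥ (∑ i, (dotp (φi i) u) • φi i) = ∑ i, (dotp (φi i) u) ^ 2 := by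
    simp only [dotProduct, Finset.sum_apply, Pi.smul_apply, smul_eq_mul,
      Finset.mul_sum]
    rw [Finset.sum_comm]
    refine Finset.sum_congr rfl fun i _ => ?_
    set c := dotp (φi i) u with hcdef
    have hc : c = ∑ j, φi i j * u j := rfl
    calc ∑ j, u j * (c * φi i j) = ∑ j, (φi i j * u j) * c :=
          Finset.sum_congr rfl fun j _ => by ring
      _ = (∑ j, φi i j * u j) * c := (Finset.sum_mul _ _ _).symm
      _ = c * c := by rw [← hc]
      _ = c ^ 2 := (pow_two c).symm
  rw [h1, h2, smul_eq_mul, smul_eq_mul]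

lemma sqe_pos_of_ne_zero {d : ℕ} {u : Fin d → ℝ} (hu : u ≠ 0) : 0 < sqe u := by
  rcases Function.ne_iff.mp hu with ⟨i, hi⟩
  have : (0 : ℝ) < (u i) ^ 2 :=
    lt_of_le_of_ne (sq_nonneg _) (Ne.symm (pow_ne_zero 2 hi))
  calc (0 : ℝ) < (u i) ^ 2 := this
    _ ≤ sqe u := Finset.single_le_sum (fun j _ => sq_nonneg (u j)) (Finset.mem_univ i)

lemma covMat_posDef {d n : ℕ} {β : ℝ} (hβ : 0 < β) (φi : Fin n → Fin d → ℝ) :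
    (covMat β φi).PosDef := by
  rw [Matrix.posDef_iff_dotProduct_mulVec]
  constructor
  · show (covMat β φi)ᴴ = covMat β φi
    unfold covMat
    ext j k
    simp only [Matrix.conjTranspose_apply, Matrix.add_apply, Matrix.smul_apply,
      Matrix.one_apply, Matrix.sum_apply, Matrix.vecMulVec_apply, smul_eq_mul, star_trivial]
    congr 1
    · congr 1
      by_cases h : j = k
      · simp [h]
      · rw [if_neg (fun hh => h hh.symm), if_neg h]
    · congr 1
      exact Finset.sum_congr rfl fun i _ => mul_comm _ _
  · intro x hx
    have hq := covMat_qf β φi x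
    have hst : star x = x := by simp
    rw [hst, hq]
    have h1 : 0 < β * sqe x := mul_pos hβ (sqe_pos_of_ne_zero hx)
    have h2 : 0 ≤ (n : ℝ)⁻¹ * ∑ i, (dotp (φi i) x) ^ 2 := by positivity
    linarith


lemma dotp_sub {d : ℕ} (u x y : Fin d → ℝ) : dotp u (x - y) = dotp u x - dotp u y := by
  unfold dotp
  rw [← Finset.sum_sub_distrib]
  exact Finset.sum_congr rfl fun i _ => by simp [mul_sub]

lemma qf_eq_trace {d : ℕ} (N : Matrix (Fin d) (Fin d) ℝ) (x : Fin d → ℝ) :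
    x ⬝ᵥ (N *ᵥ x) = Matrix.trace (N * Matrix.vecMulVec x x) := by
  simp only [Matrix.trace, Matrix.diag_apply, Matrix.mul_apply, Matrix.vecMulVec_apply,
    dotProduct, Matrix.mulVec, Finset.mul_sum]
  exact Finset.sum_congr rfl fun j _ => Finset.sum_congr rfl fun k _ => by ring

lemma trace_nonneg_of_posSemidef {d : ℕ} {N : Matrix (Fin d) (Fin d) ℝ}
    (hN : N.PosSemidef) : 0 ≤ Matrix.trace N := by
  rw [Matrix.trace]
  refine Finset.sum_nonneg fun j _ => ?_
  have h := hN.dotProduct_mulVec_nonneg (Pi.single j 1)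
  simpa [Matrix.diag, dotProduct, Matrix.mulVec, Pi.single_apply] using h


/-- bound on the weighted norm of the gradient of the estimated objective:
`‖Λ̂ g_λ(t)‖²_{Λ̂⁻¹} ≤ 6β(d + D_θ²) + 3d(1 + RD_θ)² + 3γ²dR²D_θ²`. -/
theorem statement13 {X A : Type*} [Fintype X] [Fintype A] {d n : ℕ} (hn : 0 < n)
    (R β γ Dθ : ℝ) (hβ : 0 < β) (hγ : γ ∈ Set.Ioo (0 : ℝ) 1)
    (φ : X → A → Fin d → ℝ) (hφ : ∀ x a, nrm2 (φ x a) ≤ R)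
    (omg : Fin d → ℝ) (homg : nrm2 omg ≤ Real.sqrt d)
    (Xi : Fin n → X) (Ai : Fin n → A) (Xs : Fin n → X)
    (hrw : ∀ i, dotp (φ (Xi i) (Ai i)) omg ∈ Set.Icc (0 : ℝ) 1)
    (θ : Fin d → ℝ) (hθ : nrm2 θ ≤ Dθ)
    (π : X → A → ℝ) (hπ : IsPolicy π) :
    wnormSq (covMat β (fun i => φ (Xi i) (Ai i)))⁻¹
        ((covMat β (fun i => φ (Xi i) (Ai i))).mulVec
          (omg + γ • psiHatApply β (fun i => φ (Xi i) (Ai i)) Xs (vparam φ θ π) - θ))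
      ≤ 6 * β * (d + Dθ ^ 2) + 3 * d * (1 + R * Dθ) ^ 2 + 3 * γ ^ 2 * d * R ^ 2 * Dθ ^ 2 := by
  obtain ⟨hγ0, hγ1⟩ := hγ
  obtain ⟨hπ0, hπ1⟩ := hπ
  have hn0 : (0:ℝ) < (n:ℝ) := by exact_mod_cast hn
  have hnne : (n:ℝ) ≠ 0 := hn0.ne'
  set φi : Fin n → Fin d → ℝ := fun i => φ (Xi i) (Ai i) with hφidef
  set Λ : Matrix (Fin d) (Fin d) ℝ := covMat β φi with hΛdef
  have hPD : Λ.PosDef := covMat_posDef hβ φi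
  have hdet : IsUnit Λ.det := (Matrix.isUnit_iff_isUnit_det Λ).mp hPD.isUnit
  have hMul : Λ * Λ⁻¹ = 1 := Matrix.mul_nonsing_inv Λ hdet
  have hMul' : Λ⁻¹ * Λ = 1 := Matrix.nonsing_inv_mul Λ hdet
  have hMinv : (Λ⁻¹).PosDef := hPD.inv
  open scoped MatrixOrder Matrix.Norms.L2Operator in
  obtain ⟨B, hB⟩ := CStarAlgebra.nonneg_iff_eq_star_mul_self.mp hMinv.posSemidef.nonneg
  rw [Matrix.star_eq_conjTranspose] at hB
  have hw : ∀ u : Fin d → ℝ, wnormSq Λ⁻¹ u = sqe (B *ᵥ u) := by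
    intro u
    show u ⬝ᵥ (Λ⁻¹ *ᵥ u) = sqe (B *ᵥ u)
    rw [hB, ← Matrix.mulVec_mulVec, Matrix.dotProduct_mulVec, Matrix.vecMul_conjTranspose]
    simp [dotProduct, sqe, pow_two]
  have hwle : ∀ u : Fin d → ℝ, wnormSq Λ⁻¹ u ≤ β⁻¹ * sqe u := by
    intro u
    set w : Fin d → ℝ := Λ⁻¹ *ᵥ u with hwdef
    have hu : Λ *ᵥ w = u := by rw [hwdef, Matrix.mulVec_mulVec, hMul, Matrix.one_mulVec]
    have hs : wnormSq Λ⁻¹ u = u ⬝ᵥ w := rfl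
    have hs0 : 0 ≤ u ⬝ᵥ w := by rw [← hs, hw]; exact sqe_nonneg _
    have h2 : β * sqe w ≤ u ⬝ᵥ w := by
      have hcomm : u ⬝ᵥ w = w ⬝ᵥ (Λ *ᵥ w) := by
        rw [← hu]; exact dotProduct_comm _ _
      rw [hcomm, hΛdef, covMat_qf]
      have hnn : 0 ≤ (n:ℝ)⁻¹ * ∑ i, (dotp (φi i) w) ^ 2 := by positivity
      linarith
    have h3 : (u ⬝ᵥ w) ^ 2 ≤ sqe u * sqe w := dotp_sq_le u w
    have key : β * (u ⬝ᵥ w) ≤ sqe u := by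
      rcases eq_or_lt_of_le hs0 with h0 | h0
      · rw [← h0, mul_zero]; exact sqe_nonneg u
      · nlinarith [sqe_nonneg u, sqe_nonneg w,
          mul_le_mul_of_nonneg_left h2 (sqe_nonneg u),
          mul_le_mul_of_nonneg_left h3 hβ.le]
    rw [hs]
    have h4 := mul_le_mul_of_nonneg_left key (inv_nonneg.mpr hβ.le)
    calc u ⬝ᵥ w = β⁻¹ * (β * (u ⬝ᵥ w)) := by field_simp
      _ ≤ β⁻¹ * sqe u := h4
  have htrace : (n:ℝ)⁻¹ * ∑ i, sqe (B *ᵥ φi i) ≤ d := by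
    have hsq : ∀ i : Fin n, sqe (B *ᵥ φi i) = φi i ⬝ᵥ (Λ⁻¹ *ᵥ φi i) :=
      fun i => (hw (φi i)).symm
    have h2 : ∑ i : Fin n, Matrix.trace (Λ⁻¹ * Matrix.vecMulVec (φi i) (φi i))
        = Matrix.trace (Λ⁻¹ * ∑ i : Fin n, Matrix.vecMulVec (φi i) (φi i)) := by
      rw [Matrix.mul_sum, Matrix.trace_sum]
    have h3 : Λ⁻¹ * ((n:ℝ)⁻¹ • ∑ i : Fin n, Matrix.vecMulVec (φi i) (φi i))
        = 1 - β • Λ⁻¹ := by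
      have hS : (n:ℝ)⁻¹ • ∑ i : Fin n, Matrix.vecMulVec (φi i) (φi i) = Λ - β • 1 := by
        rw [hΛdef]
        show (n:ℝ)⁻¹ • ∑ i : Fin n, Matrix.vecMulVec (φi i) (φi i)
          = (β • 1 + (n:ℝ)⁻¹ • ∑ i : Fin n, Matrix.vecMulVec (φi i) (φi i)) - β • 1
        rw [add_sub_cancel_left]
      rw [hS, Matrix.mul_sub, hMul', mul_smul_comm, mul_one]
    calc (n:ℝ)⁻¹ * ∑ i, sqe (B *ᵥ φi i)
        = (n:ℝ)⁻¹ * ∑ i : Fin n, Matrix.trace (Λ⁻¹ * Matrix.vecMulVec (φi i) (φi i)) := by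
          congr 1
          exact Finset.sum_congr rfl fun i _ => (hsq i).trans (qf_eq_trace _ _)
      _ = Matrix.trace (Λ⁻¹ * ((n:ℝ)⁻¹ • ∑ i : Fin n, Matrix.vecMulVec (φi i) (φi i))) := by
          rw [h2, mul_smul_comm, Matrix.trace_smul, smul_eq_mul]
      _ = Matrix.trace ((1 : Matrix (Fin d) (Fin d) ℝ) - β • Λ⁻¹) := by rw [h3]
      _ = (d : ℝ) - β * Matrix.trace Λ⁻¹ := by
          rw [Matrix.trace_sub, Matrix.trace_one, Matrix.trace_smul, smul_eq_mul]
          simp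
      _ ≤ d := by
          have htr := trace_nonneg_of_posSemidef hMinv.posSemidef
          nlinarith
  have hbc : ∀ (cf : Fin n → ℝ) (C : ℝ), 0 ≤ C → (∀ i, |cf i| ≤ C) →
      sqe (B *ᵥ ((n:ℝ)⁻¹ • ∑ i, cf i • φi i)) ≤ C ^ 2 * d := by
    intro cf C hC hcf
    have hlin : B *ᵥ ((n:ℝ)⁻¹ • ∑ i, cf i • φi i)
        = (n:ℝ)⁻¹ • ∑ i, cf i • (B *ᵥ φi i) := by
      rw [Matrix.mulVec_smul]
      congr 1
      rw [← Matrix.mulVecLin_apply, map_sum]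
      exact Finset.sum_congr rfl fun i _ => by rw [_root_.map_smul, Matrix.mulVecLin_apply]
    rw [hlin, sqe_smul]
    have h2' : ∑ i, sqe (cf i • (B *ᵥ φi i)) ≤ ∑ i, C ^ 2 * sqe (B *ᵥ φi i) := by
      refine Finset.sum_le_sum fun i _ => ?_
      rw [sqe_smul]
      have hc2 : cf i ^ 2 ≤ C ^ 2 := by
        nlinarith [abs_nonneg (cf i), hcf i, sq_abs (cf i)]
      exact mul_le_mul_of_nonneg_right hc2 (sqe_nonneg _)
    have hT : sqe (∑ i, cf i • (B *ᵥ φi i)) ≤ n * (C ^ 2 * ∑ i, sqe (B *ᵥ φi i)) := by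
      calc sqe (∑ i, cf i • (B *ᵥ φi i)) ≤ n * ∑ i, sqe (cf i • (B *ᵥ φi i)) :=
            sqe_sum_le _
        _ ≤ n * (C ^ 2 * ∑ i, sqe (B *ᵥ φi i)) := by
            rw [show C ^ 2 * ∑ i, sqe (B *ᵥ φi i) = ∑ i, C ^ 2 * sqe (B *ᵥ φi i) from
              Finset.mul_sum _ _ _]
            exact mul_le_mul_of_nonneg_left h2' hn0.le
    calc ((n:ℝ)⁻¹) ^ 2 * sqe (∑ i, cf i • (B *ᵥ φi i))
        ≤ ((n:ℝ)⁻¹) ^ 2 * (n * (C ^ 2 * ∑ i, sqe (B *ᵥ φi i))) :=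
          mul_le_mul_of_nonneg_left hT (by positivity)
      _ = C ^ 2 * ((n:ℝ)⁻¹ * ∑ i, sqe (B *ᵥ φi i)) := by
          field_simp
      _ ≤ C ^ 2 * d := mul_le_mul_of_nonneg_left htrace (by positivity)
  -- decomposition of the gradient
  set v : X → ℝ := vparam φ θ π with hvdef
  set q : Fin d → ℝ := (n:ℝ)⁻¹ • ∑ i, v (Xs i) • φi i with hqdef
  have hPsi : psiHatApply β φi Xs v = Λ⁻¹ *ᵥ q := by
    rw [hΛdef, hqdef]; rfl
  set aa : Fin d → ℝ := β • (omg - θ) with haadef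
  set bb : Fin d → ℝ := (n:ℝ)⁻¹ • ∑ i, (dotp (φi i) omg - dotp (φi i) θ) • φi i with hbbdef
  set cc : Fin d → ℝ := (n:ℝ)⁻¹ • ∑ i, (γ * v (Xs i)) • φi i with hccdef
  have hdec : Λ *ᵥ (omg + γ • psiHatApply β φi Xs v - θ) = aa + bb + cc := by
    have e1 : Λ *ᵥ (omg + γ • psiHatApply β φi Xs v - θ)
        = Λ *ᵥ (omg - θ) + γ • (Λ *ᵥ (Λ⁻¹ *ᵥ q)) := by
      rw [hPsi, show omg + γ • (Λ⁻¹ *ᵥ q) - θ = (omg - θ) + γ • (Λ⁻¹ *ᵥ q) from by abel,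
        Matrix.mulVec_add, Matrix.mulVec_smul]
    rw [e1, Matrix.mulVec_mulVec, hMul, Matrix.one_mulVec]
    have e2 : Λ *ᵥ (omg - θ) = aa + bb := by
      rw [hΛdef, covMat_mulVec, haadef, hbbdef]
      congr 2
      exact Finset.sum_congr rfl fun i _ => by rw [dotp_sub]
    have e3 : γ • q = cc := by
      rw [hqdef, hccdef, smul_comm]
      congr 1
      rw [Finset.smul_sum]
      exact Finset.sum_congr rfl fun i _ => smul_smul γ _ _
    rw [e2, e3]
  -- coefficient bounds
  have hR0 : 0 ≤ R := le_trans (Real.sqrt_nonneg _) (hφ (Xi ⟨0, hn⟩) (Ai ⟨0, hn⟩))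
  have hD0 : 0 ≤ Dθ := le_trans (Real.sqrt_nonneg _) hθ
  have hdotθ : ∀ x a, |dotp θ (φ x a)| ≤ R * Dθ := by
    intro x a
    calc |dotp θ (φ x a)| ≤ nrm2 θ * nrm2 (φ x a) := abs_dotp_le _ _
      _ ≤ Dθ * R := mul_le_mul hθ (hφ x a) (Real.sqrt_nonneg _) hD0
      _ = R * Dθ := mul_comm _ _
  have hvb : ∀ x, |v x| ≤ R * Dθ := by
    intro x
    rw [hvdef]
    show |∑ a, π x a * dotp θ (φ x a)| ≤ R * Dθ
    calc |∑ a, π x a * dotp θ (φ x a)| ≤ ∑ a, |π x a * dotp θ (φ x a)| :=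
          Finset.abs_sum_le_sum_abs _ _
      _ ≤ ∑ a, π x a * (R * Dθ) := by
          refine Finset.sum_le_sum fun a _ => ?_
          rw [abs_mul, abs_of_nonneg (hπ0 x a)]
          exact mul_le_mul_of_nonneg_left (hdotθ x a) (hπ0 x a)
      _ = R * Dθ := by rw [← Finset.sum_mul, hπ1 x, one_mul]
  have hcb : ∀ i, |dotp (φi i) omg - dotp (φi i) θ| ≤ 1 + R * Dθ := by
    intro i
    have h1 := hrw i
    have h1' : |dotp (φi i) omg| ≤ 1 := by
      have := h1.1; have := h1.2
      rw [abs_le]; constructor <;> [linarith; exact h1.2]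
    have h2 : |dotp (φi i) θ| ≤ R * Dθ := by
      rw [dotp_comm]; exact hdotθ (Xi i) (Ai i)
    calc |dotp (φi i) omg - dotp (φi i) θ| ≤ |dotp (φi i) omg| + |dotp (φi i) θ| :=
          abs_sub _ _
      _ ≤ 1 + R * Dθ := add_le_add h1' h2
  have hccf : ∀ i, |γ * v (Xs i)| ≤ γ * (R * Dθ) := by
    intro i
    rw [abs_mul, abs_of_pos hγ0]
    exact mul_le_mul_of_nonneg_left (hvb (Xs i)) hγ0.le
  -- assemble
  rw [hw, hdec]
  have hsplit : B *ᵥ (aa + bb + cc) = B *ᵥ aa + B *ᵥ bb + B *ᵥ cc := by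
    rw [Matrix.mulVec_add, Matrix.mulVec_add]
  rw [hsplit]
  have hTa : sqe (B *ᵥ aa) ≤ 2 * β * (d + Dθ ^ 2) := by
    have h1 : sqe (B *ᵥ aa) = wnormSq Λ⁻¹ aa := (hw aa).symm
    have h2 : sqe aa = β ^ 2 * sqe (omg - θ) := by rw [haadef]; exact sqe_smul β _
    have h3 : sqe (omg - θ) ≤ 2 * d + 2 * Dθ ^ 2 := by
      have ho : sqe omg ≤ d := by
        have hh := sqe_le_of_nrm2_le homg
        rwa [Real.sq_sqrt (Nat.cast_nonneg d)] at hh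
      have ht : sqe θ ≤ Dθ ^ 2 := sqe_le_of_nrm2_le hθ
      have hq : sqe (omg - θ) ≤ 2 * sqe omg + 2 * sqe θ := by
        unfold sqe
        rw [Finset.mul_sum, Finset.mul_sum, ← Finset.sum_add_distrib]
        refine Finset.sum_le_sum fun i _ => ?_
        simp only [Pi.sub_apply]
        nlinarith [sq_nonneg (omg i + θ i)]
      linarith
    rw [h1]
    calc wnormSq Λ⁻¹ aa ≤ β⁻¹ * sqe aa := hwle aa
      _ = β * sqe (omg - θ) := by rw [h2]; field_simp
      _ ≤ β * (2 * d + 2 * Dθ ^ 2) := mul_le_mul_of_nonneg_left h3 hβ.le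
      _ = 2 * β * (d + Dθ ^ 2) := by ring
  have hTb : sqe (B *ᵥ bb) ≤ (1 + R * Dθ) ^ 2 * d := by
    rw [hbbdef]
    exact hbc _ _ (by nlinarith [mul_nonneg hR0 hD0]) hcb
  have hTc : sqe (B *ᵥ cc) ≤ (γ * (R * Dθ)) ^ 2 * d := by
    rw [hccdef]
    exact hbc _ _ (mul_nonneg hγ0.le (mul_nonneg hR0 hD0)) hccf
  have hstep := sqe_add3_le (B *ᵥ aa) (B *ᵥ bb) (B *ᵥ cc)
  have hd0 : (0:ℝ) ≤ d := Nat.cast_nonneg d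
  calc sqe (B *ᵥ aa + B *ᵥ bb + B *ᵥ cc)
      ≤ 3 * (sqe (B *ᵥ aa) + sqe (B *ᵥ bb) + sqe (B *ᵥ cc)) := hstep
    _ ≤ 3 * (2 * β * (d + Dθ ^ 2) + (1 + R * Dθ) ^ 2 * d + (γ * (R * Dθ)) ^ 2 * d) := by
        linarith
    _ = 6 * β * (d + Dθ ^ 2) + 3 * d * (1 + R * Dθ) ^ 2 + 3 * γ ^ 2 * d * R ^ 2 * Dθ ^ 2 := by
        ring


end Paper
end
end

section
/- Let q_1,…,q_T: 𝒳×𝒜 → ℝ satisfy ‖q_t‖_∞ ≤ RD_θ for all t, let π₁ be any initial policy and α > 0, and define π_{t+1}(a|x) = π_t(a|x)exp(α q_t(x,a)) / ∑_{a'} π_t(a'|x)exp(α q_t(x,a')). Then for any comparator policy π* and any state distribution ν*, ∑_{t=1}^T ∑_x ν*(x) ∑_a (π*(a|x) − π_t(a|x)) q_t(x,a) ≤ (∑_x ν*(x) D_KL(π*(·|x) ‖ π₁(·|x)))/α + αTR²D_θ²/2. -/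
noncomputable section
open MeasureTheory Finset Matrix
open scoped BigOperators ENNReal

namespace Paper

variable {X A : Type*}

lemma hoeff_scalar {p : ℝ} (hp0 : 0 ≤ p) (hp1 : p ≤ 1) (u : ℝ) :
    Real.log (1 - p + p * Real.exp u) ≤ p * u + u ^ 2 / 8 := by
  have hgpos : ∀ v : ℝ, 0 < 1 - p + p * Real.exp v := by
    intro v
    rcases eq_or_lt_of_le hp0 with h | h
    · simp [← h]
    · nlinarith [Real.exp_pos v]
  set D : ℝ → ℝ := fun v => p * Real.exp v / (1 - p + p * Real.exp v) with hDdef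
  have hg : ∀ v : ℝ, HasDerivAt (fun w => 1 - p + p * Real.exp w) (p * Real.exp v) v := by
    intro v
    simpa using ((Real.hasDerivAt_exp v).const_mul p).const_add (1 - p)
  have hD : ∀ v : ℝ, HasDerivAt D
      (p * (1 - p) * Real.exp v / (1 - p + p * Real.exp v) ^ 2) v := by
    intro v
    have h := ((Real.hasDerivAt_exp v).const_mul p).div (hg v) (hgpos v).ne'
    refine h.congr_deriv ?_
    congr 1
    ring
  have hD'le : ∀ v : ℝ, p * (1 - p) * Real.exp v / (1 - p + p * Real.exp v) ^ 2 ≤ 1/4 := by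
    intro v
    rw [div_le_iff₀ (pow_pos (hgpos v) 2)]
    nlinarith [Real.exp_pos v, sq_nonneg (1 - p - p * Real.exp v)]
  -- Φ
  have hΦd : ∀ v : ℝ, HasDerivAt (fun w => p + w / 4 - D w)
      (1/4 - p * (1 - p) * Real.exp v / (1 - p + p * Real.exp v) ^ 2) v := by
    intro v
    have h1 : HasDerivAt (fun w : ℝ => p + w / 4) (1/4) v := by
      simpa using ((hasDerivAt_id v).div_const 4).const_add p
    exact h1.sub (hD v)
  have hΦmono : Monotone (fun w => p + w / 4 - D w) :=
    monotone_of_hasDerivAt_nonneg hΦd (fun v => by simp only [Pi.zero_apply]; linarith [hD'le v])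
  have hΦ0 : p + (0:ℝ) / 4 - D 0 = 0 := by
    have h1 : (1:ℝ) - p + p * Real.exp 0 = 1 := by simp
    simp [hDdef, h1]
  -- F
  set F : ℝ → ℝ := fun w => p * w + w ^ 2 / 8 - Real.log (1 - p + p * Real.exp w) with hFdef
  have hFd : ∀ v : ℝ, HasDerivAt F (p + v / 4 - D v) v := by
    intro v
    have h1 : HasDerivAt (fun w : ℝ => p * w + w ^ 2 / 8) (p + v / 4) v := by
      have := ((hasDerivAt_pow 2 v).div_const 8).const_add 0
      have h2 : HasDerivAt (fun w : ℝ => p * w) p v := by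
        simpa using (hasDerivAt_id v).const_mul p
      have h3 : HasDerivAt (fun w : ℝ => w ^ 2 / 8) (v / 4) v := by
        have := (hasDerivAt_pow 2 v).div_const 8
        refine this.congr_deriv ?_
        norm_num
        ring
      exact h2.add h3
    exact h1.sub ((hg v).log (hgpos v).ne')
  have hF0 : F 0 = 0 := by simp [hFdef]
  have key : 0 ≤ F u := by
    rcases le_total 0 u with hu | hu
    · have hmono : MonotoneOn F (Set.Ici 0) := by
        apply monotoneOn_of_hasDerivWithinAt_nonneg (convex_Ici 0)
          (fun v _ => ((hFd v).continuousAt.continuousWithinAt))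
          (fun v _ => (hFd v).hasDerivWithinAt)
        intro v hv
        rw [interior_Ici] at hv
        have := hΦmono (le_of_lt hv : (0:ℝ) ≤ v)
        simp only at this
        rw [hΦ0] at this
        linarith
      have := hmono (Set.self_mem_Ici) (Set.mem_Ici.2 hu) hu
      linarith [hF0]
    · have hanti : AntitoneOn F (Set.Iic 0) := by
        apply antitoneOn_of_hasDerivWithinAt_nonpos (convex_Iic 0)
          (fun v _ => ((hFd v).continuousAt.continuousWithinAt))
          (fun v _ => (hFd v).hasDerivWithinAt)
        intro v hv
        rw [interior_Iic] at hv
        have := hΦmono (le_of_lt hv : v ≤ (0:ℝ))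
        simp only at this
        rw [hΦ0] at this
        linarith
      have := hanti (Set.mem_Iic.2 hu) (Set.self_mem_Iic) hu
      linarith [hF0]
  simp only [hFdef] at key
  linarith

lemma hoeff_sum {A : Type*} [Fintype A] [Nonempty A] (p f : A → ℝ) (m : ℝ)
    (hp : ∀ a, 0 ≤ p a) (hs : ∑ a, p a = 1) (hf : ∀ a, |f a| ≤ m) :
    Real.log (∑ a, p a * Real.exp (f a)) ≤ (∑ a, p a * f a) + m ^ 2 / 2 := by
  have hm0 : 0 ≤ m := le_trans (abs_nonneg _) (hf (Classical.arbitrary A))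
  rcases eq_or_lt_of_le hm0 with h | hm
  · have hf0 : ∀ a, f a = 0 := fun a =>
      abs_eq_zero.mp (le_antisymm (h ▸ hf a) (abs_nonneg _))
    simp [hf0, hs, ← h]
  · set θ : A → ℝ := fun a => (f a + m) / (2 * m) with hθdef
    have hθ0 : ∀ a, 0 ≤ θ a := fun a => by
      have := (abs_le.mp (hf a)).1
      apply div_nonneg (by linarith) (by linarith)
    have hθ1 : ∀ a, θ a ≤ 1 := fun a => by
      have := (abs_le.mp (hf a)).2
      rw [div_le_one (by linarith)]
      linarith
    have hconv : ∀ a, Real.exp (f a) ≤ (1 - θ a) * Real.exp (-m) + θ a * Real.exp m := by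
      intro a
      have h := convexOn_exp.2 (Set.mem_univ (-m)) (Set.mem_univ m)
        (by linarith [hθ1 a] : (0:ℝ) ≤ 1 - θ a) (hθ0 a) (by ring)
      have harg : (1 - θ a) • (-m) + θ a • m = f a := by
        simp only [smul_eq_mul, hθdef]
        field_simp
        ring
      rw [harg] at h
      simpa using h
    set tb : ℝ := ∑ a, p a * θ a with htb
    have htb0 : 0 ≤ tb := Finset.sum_nonneg fun a _ => mul_nonneg (hp a) (hθ0 a)
    have htb1 : tb ≤ 1 := by
      calc tb ≤ ∑ a, p a := Finset.sum_le_sum fun a _ => by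
                nlinarith [hθ1 a, hp a]
        _ = 1 := hs
    have hS : (∑ a, p a * Real.exp (f a)) ≤ (1 - tb) * Real.exp (-m) + tb * Real.exp m := by
      calc (∑ a, p a * Real.exp (f a))
          ≤ ∑ a, p a * ((1 - θ a) * Real.exp (-m) + θ a * Real.exp m) :=
            Finset.sum_le_sum fun a _ => mul_le_mul_of_nonneg_left (hconv a) (hp a)
        _ = (1 - tb) * Real.exp (-m) + tb * Real.exp m := by
            have he : ∀ a ∈ Finset.univ, p a * ((1 - θ a) * Real.exp (-m) + θ a * Real.exp m)
                = (p a - p a * θ a) * Real.exp (-m) + (p a * θ a) * Real.exp m :=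
              fun a _ => by ring
            rw [Finset.sum_congr rfl he, Finset.sum_add_distrib, ← Finset.sum_mul,
              ← Finset.sum_mul, Finset.sum_sub_distrib, hs, htb]
    have hSpos : (0:ℝ) < ∑ a, p a * Real.exp (f a) := by
      have : Real.exp (-m) = ∑ a, p a * Real.exp (-m) := by
        rw [← Finset.sum_mul, hs, one_mul]
      calc (0:ℝ) < Real.exp (-m) := Real.exp_pos _
        _ = ∑ a, p a * Real.exp (-m) := this
        _ ≤ ∑ a, p a * Real.exp (f a) := Finset.sum_le_sum fun a _ =>
            mul_le_mul_of_nonneg_left (Real.exp_le_exp.mpr (by linarith [(abs_le.mp (hf a)).1])) (hp a)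
    have hRw : (1 - tb) * Real.exp (-m) + tb * Real.exp m
        = Real.exp (-m) * (1 - tb + tb * Real.exp (2 * m)) := by
      have : Real.exp (-m) * Real.exp (2 * m) = Real.exp m := by
        rw [← Real.exp_add]; ring_nf
      nlinarith [this]
    have hXpos : (0:ℝ) < 1 - tb + tb * Real.exp (2 * m) := by
      nlinarith [Real.one_le_exp (by linarith : (0:ℝ) ≤ 2 * m), htb0, htb1]
    have hlog1 : Real.log (∑ a, p a * Real.exp (f a))
        ≤ -m + Real.log (1 - tb + tb * Real.exp (2 * m)) := by
      calc Real.log (∑ a, p a * Real.exp (f a))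
          ≤ Real.log ((1 - tb) * Real.exp (-m) + tb * Real.exp m) :=
            Real.log_le_log hSpos hS
        _ = -m + Real.log (1 - tb + tb * Real.exp (2 * m)) := by
            rw [hRw, Real.log_mul (Real.exp_ne_zero _) hXpos.ne', Real.log_exp]
    have hsc := hoeff_scalar htb0 htb1 (2 * m)
    have hmu : 2 * m * tb = (∑ a, p a * f a) + m := by
      have he : ∀ a ∈ Finset.univ, 2 * m * (p a * θ a) = p a * f a + p a * m :=
        fun a _ => by
          simp only [hθdef]
          field_simp
      rw [htb, Finset.mul_sum, Finset.sum_congr rfl he, Finset.sum_add_distrib,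
        ← Finset.sum_mul, hs, one_mul]
    nlinarith [hlog1, hsc, hmu]

lemma kl_nonneg {A : Type*} [Fintype A] (p q : A → ℝ) (hp : ∀ a, 0 ≤ p a)
    (hps : ∑ a, p a = 1) (hq : ∀ a, 0 < q a) (hqs : ∑ a, q a = 1) :
    0 ≤ KLdiv p q := by
  have key : ∀ a ∈ Finset.univ, p a - q a ≤ p a * Real.log (p a / q a) := by
    intro a _
    rcases eq_or_lt_of_le (hp a) with h | h
    · simp [← h]
      exact (hq a).le
    · have h1 : Real.log (q a / p a) ≤ q a / p a - 1 :=
        Real.log_le_sub_one_of_pos (div_pos (hq a) h)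
      have h2 : Real.log (q a / p a) = - Real.log (p a / q a) := by
        rw [← Real.log_inv]
        congr 1
        rw [inv_div]
      rw [h2] at h1
      have h3 : 1 - q a / p a ≤ Real.log (p a / q a) := by linarith
      have := mul_le_mul_of_nonneg_left h3 h.le
      calc p a - q a = p a * (1 - q a / p a) := by field_simp
        _ ≤ p a * Real.log (p a / q a) := this
  have := Finset.sum_le_sum key
  rw [Finset.sum_sub_distrib, hps, hqs] at this
  simpa [KLdiv] using this

lemma kl_step {A : Type*} [Fintype A] [Nonempty A] (ps pt pt1 qv : A → ℝ) (α : ℝ)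
    (hps0 : ∀ a, 0 ≤ ps a) (hpss : ∑ a, ps a = 1) (hpt : ∀ a, 0 < pt a)
    (hrec : ∀ a, pt1 a = pt a * Real.exp (α * qv a) / ∑ a', pt a' * Real.exp (α * qv a')) :
    KLdiv ps pt - KLdiv ps pt1
      = α * (∑ a, ps a * qv a) - Real.log (∑ a', pt a' * Real.exp (α * qv a')) := by
  set Z : ℝ := ∑ a', pt a' * Real.exp (α * qv a') with hZ
  have hZpos : 0 < Z := Finset.sum_pos (fun a _ => mul_pos (hpt a) (Real.exp_pos _))
    Finset.univ_nonempty
  have hpt1 : ∀ a, 0 < pt1 a := fun a => by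
    rw [hrec a]
    exact div_pos (mul_pos (hpt a) (Real.exp_pos _)) hZpos
  have key : ∀ a ∈ Finset.univ,
      ps a * Real.log (ps a / pt a) - ps a * Real.log (ps a / pt1 a)
        = ps a * (α * qv a) - ps a * Real.log Z := by
    intro a _
    rcases eq_or_lt_of_le (hps0 a) with h | h
    · simp [← h]
    · have hlog1 : Real.log (ps a / pt a) = Real.log (ps a) - Real.log (pt a) :=
        Real.log_div h.ne' (hpt a).ne'
      have hlog2 : Real.log (ps a / pt1 a) = Real.log (ps a) - Real.log (pt1 a) :=
        Real.log_div h.ne' (hpt1 a).ne'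
      have hlog3 : Real.log (pt1 a) = Real.log (pt a) + α * qv a - Real.log Z := by
        rw [hrec a, Real.log_div (mul_pos (hpt a) (Real.exp_pos _)).ne' hZpos.ne',
          Real.log_mul (hpt a).ne' (Real.exp_ne_zero _), Real.log_exp]
      rw [hlog1, hlog2, hlog3]
      ring
  have : ∑ x : A, ps x * Real.log (ps x / pt x) - ∑ x : A, ps x * Real.log (ps x / pt1 x)
      = ∑ x : A, ps x * (α * qv x) - ∑ x : A, ps x * Real.log Z := by
    rw [← Finset.sum_sub_distrib, Finset.sum_congr rfl key, Finset.sum_sub_distrib]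
  have h1 : ∑ x : A, ps x * (α * qv x) = α * ∑ a, ps a * qv a := by
    rw [Finset.mul_sum]
    exact Finset.sum_congr rfl fun a _ => by ring
  have h2 : ∑ x : A, ps x * Real.log Z = Real.log Z := by
    rw [← Finset.sum_mul, hpss, one_mul]
  simp only [KLdiv]
  rw [this, h1, h2]

lemma tel (f : ℕ → ℝ) (T : ℕ) :
    ∑ t ∈ Finset.Icc 1 T, (f t - f (t + 1)) = f 1 - f (T + 1) := by
  induction T with
  | zero => simp
  | succ n ih =>
    rw [← Finset.insert_Icc_right_eq_Icc_add_one (by omega), Finset.sum_insert (by simp), ih]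
    ring

/-- regret bound for exponential-weights policy updates against any comparator
policy, in terms of the KL divergence to the initial policy. -/
theorem statement14 {X A : Type*} [Fintype X] [Fintype A] [Nonempty A] (T : ℕ)
    (α R Dθ : ℝ) (hα : 0 < α)
    (ν : X → ℝ) (hν : IsDist ν)
    (q : ℕ → X → A → ℝ) (hq : ∀ t x a, |q t x a| ≤ R * Dθ)
    (π : ℕ → X → A → ℝ)
    (hπ1 : IsPolicy (π 1)) (hπ1pos : ∀ x a, 0 < π 1 x a)
    (hrec : ∀ t, 1 ≤ t → ∀ x a,
      π (t + 1) x a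
        = π t x a * Real.exp (α * q t x a) / ∑ a', π t x a' * Real.exp (α * q t x a'))
    (πstar : X → A → ℝ) (hπstar : IsPolicy πstar) :
    ∑ t ∈ Finset.Icc 1 T, ∑ x, ν x * ∑ a, (πstar x a - π t x a) * q t x a
      ≤ (∑ x, ν x * KLdiv (πstar x) (π 1 x)) / α + α * T * R ^ 2 * Dθ ^ 2 / 2 := by
  set M : ℝ := R * Dθ with hM
  -- invariants
  have hinv : ∀ t, 1 ≤ t → (∀ x a, 0 < π t x a) ∧ ∀ x, ∑ a, π t x a = 1 := by
    intro t ht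
    induction t, ht using Nat.le_induction with
    | base => exact ⟨hπ1pos, hπ1.2⟩
    | succ n hn ih =>
      have hZ : ∀ x, 0 < ∑ a', π n x a' * Real.exp (α * q n x a') := fun x =>
        Finset.sum_pos (fun a _ => mul_pos (ih.1 x a) (Real.exp_pos _)) Finset.univ_nonempty
      refine ⟨fun x a => ?_, fun x => ?_⟩
      · rw [hrec n hn x a]
        exact div_pos (mul_pos (ih.1 x a) (Real.exp_pos _)) (hZ x)
      · rw [Finset.sum_congr rfl fun a _ => hrec n hn x a, ← Finset.sum_div,
          div_self (hZ x).ne']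
  -- per (t,x) bound
  have key : ∀ t, 1 ≤ t → ∀ x,
      ∑ a, (πstar x a - π t x a) * q t x a
        ≤ (KLdiv (πstar x) (π t x) - KLdiv (πstar x) (π (t + 1) x)) / α + α * M ^ 2 / 2 := by
    intro t ht x
    have hks := kl_step (πstar x) (π t x) (π (t + 1) x) (q t x) α
      (fun a => hπstar.1 x a) (hπstar.2 x) (fun a => (hinv t ht).1 x a)
      (fun a => hrec t ht x a)
    have hhf : ∀ a, |α * q t x a| ≤ α * M := fun a => by
      rw [abs_mul, abs_of_pos hα]
      exact mul_le_mul_of_nonneg_left (hq t x a) hα.le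
    have hho := hoeff_sum (π t x) (fun a => α * q t x a) (α * M)
      (fun a => ((hinv t ht).1 x a).le) ((hinv t ht).2 x) hhf
    have hsum1 : ∑ a, π t x a * (α * q t x a) = α * ∑ a, π t x a * q t x a := by
      rw [Finset.mul_sum]
      exact Finset.sum_congr rfl fun a _ => by ring
    have hsplit : ∑ a, (πstar x a - π t x a) * q t x a
        = (∑ a, πstar x a * q t x a) - ∑ a, π t x a * q t x a := by
      rw [← Finset.sum_sub_distrib]
      exact Finset.sum_congr rfl fun a _ => by ring
    rw [hsplit]
    rw [hsum1] at hho
    set Δ : ℝ := KLdiv (πstar x) (π t x) - KLdiv (πstar x) (π (t + 1) x) with hΔ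
    have hmain : α * ((∑ a, πstar x a * q t x a) - ∑ a, π t x a * q t x a)
        ≤ Δ + α ^ 2 * M ^ 2 / 2 := by
      have h1 : Real.log (∑ a', π t x a' * Real.exp (α * q t x a'))
          ≤ α * (∑ a, π t x a * q t x a) + (α * M) ^ 2 / 2 := hho
      nlinarith [hks, h1]
    have := (div_le_div_iff_of_pos_right hα).mpr hmain
    calc (∑ a, πstar x a * q t x a) - ∑ a, π t x a * q t x a
        = α * ((∑ a, πstar x a * q t x a) - ∑ a, π t x a * q t x a) / α := by
          field_simp
      _ ≤ (Δ + α ^ 2 * M ^ 2 / 2) / α := by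
          apply div_le_div_of_nonneg_right hmain hα.le  -- name check
      _ = Δ / α + α * M ^ 2 / 2 := by
          field_simp
  -- assemble
  set a : ℕ → ℝ := fun t => ∑ x, ν x * KLdiv (πstar x) (π t x) with ha
  have hstep : ∀ t ∈ Finset.Icc 1 T,
      ∑ x, ν x * ∑ b, (πstar x b - π t x b) * q t x b
        ≤ (a t - a (t + 1)) / α + α * M ^ 2 / 2 := by
    intro t htm
    have ht : 1 ≤ t := (Finset.mem_Icc.mp htm).1
    calc ∑ x, ν x * ∑ b, (πstar x b - π t x b) * q t x b
        ≤ ∑ x, ν x * ((KLdiv (πstar x) (π t x) - KLdiv (πstar x) (π (t + 1) x)) / α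
            + α * M ^ 2 / 2) :=
          Finset.sum_le_sum fun x _ => mul_le_mul_of_nonneg_left (key t ht x) (hν.1 x)
      _ = (a t - a (t + 1)) / α + α * M ^ 2 / 2 := by
          have he : ∀ x ∈ Finset.univ,
              ν x * ((KLdiv (πstar x) (π t x) - KLdiv (πstar x) (π (t + 1) x)) / α
                + α * M ^ 2 / 2)
              = (ν x * KLdiv (πstar x) (π t x) - ν x * KLdiv (πstar x) (π (t + 1) x)) / α
                + ν x * (α * M ^ 2 / 2) := fun x _ => by ring
          rw [Finset.sum_congr rfl he, Finset.sum_add_distrib, ← Finset.sum_div,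
            Finset.sum_sub_distrib, ← Finset.sum_mul, hν.2, one_mul, ha]
  have htel : ∑ t ∈ Finset.Icc 1 T, ((a t - a (t + 1)) / α + α * M ^ 2 / 2)
      = (a 1 - a (T + 1)) / α + T * (α * M ^ 2 / 2) := by
    rw [Finset.sum_add_distrib, ← Finset.sum_div, tel a T, Finset.sum_const,
      Nat.card_Icc]
    simp
  have haT : 0 ≤ a (T + 1) := by
    apply Finset.sum_nonneg
    intro x _
    apply mul_nonneg (hν.1 x)
    exact kl_nonneg (πstar x) (π (T + 1) x) (fun b => hπstar.1 x b) (hπstar.2 x)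
      (fun b => (hinv (T + 1) (by omega)).1 x b) ((hinv (T + 1) (by omega)).2 x)
  calc ∑ t ∈ Finset.Icc 1 T, ∑ x, ν x * ∑ b, (πstar x b - π t x b) * q t x b
      ≤ ∑ t ∈ Finset.Icc 1 T, ((a t - a (t + 1)) / α + α * M ^ 2 / 2) :=
        Finset.sum_le_sum hstep
    _ = (a 1 - a (T + 1)) / α + T * (α * M ^ 2 / 2) := htel
    _ ≤ a 1 / α + T * (α * M ^ 2 / 2) := by
        have : (a 1 - a (T + 1)) / α ≤ a 1 / α := by
          apply div_le_div_of_nonneg_right ?_ hα.le  -- name check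
          linarith
        linarith
    _ = (∑ x, ν x * KLdiv (πstar x) (π 1 x)) / α + α * T * R ^ 2 * Dθ ^ 2 / 2 := by
        rw [ha, hM]
        ring

end Paper
end
end
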